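/- arXiv:2412.03504 — 8 statements merged into one kernel-verified Lean document; each statement's English description precedes it below -/
import Mathlib

section
/- Let a, c ∈ ℕ (a, c ≥ 1) and b, d ∈ ℤ. If for every f ∈ 𝓜 one has liminf_{n→∞} |f(an+b) − f(cn+d)| = 0 (the liminf taken over n with an+b > 0 and cn+d > 0), then a = c. -/
open Filter Topology

/-- `f : ℕ → ℂ` is completely multiplicative with values on the unit circle. -/
def IsUnitCM (f : ℕ → ℂ) : Prop :=
  f 1 = 1 ∧ (∀ m n : ℕ, 1 ≤ m → 1 ≤ n → f (m * n) = f m * f n) ∧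
    ∀ n : ℕ, 1 ≤ n → ‖f n‖ = 1

theorem stmt2 (a c : ℕ) (ha : 1 ≤ a) (hc : 1 ≤ c) (b d : ℤ)
    (H : ∀ f : ℕ → ℂ, IsUnitCM f → ∀ ε : ℝ, 0 < ε → ∀ N : ℕ, ∃ n, N ≤ n ∧
      0 < (a : ℤ) * n + b ∧ 0 < (c : ℤ) * n + d ∧
      ‖f (((a : ℤ) * n + b).toNat) - f (((c : ℤ) * n + d).toNat)‖ < ε) :
    a = c := by
  by_contra hne
  have hae : (0:ℝ) < a := by exact_mod_cast ha
  have hce : (0:ℝ) < c := by exact_mod_cast hc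
  have hrpos : (0:ℝ) < (a:ℝ)/c := div_pos hae hce
  have hrne : (a:ℝ)/c ≠ 1 := by
    intro h
    exact hne (by exact_mod_cast (div_eq_one_iff_eq hce.ne').mp h)
  have hlogne : Real.log ((a:ℝ)/c) ≠ 0 := by
    intro h
    rcases Real.log_eq_zero.mp h with h1 | h1 | h1
    · exact hrpos.ne' h1
    · exact hrne h1
    · linarith
  set t : ℝ := Real.pi / Real.log ((a:ℝ)/c) with ht
  set f : ℕ → ℂ := fun n => Complex.exp (Complex.I * ((t * Real.log n : ℝ) : ℂ)) with hf
  have hfcm : IsUnitCM f := by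
    refine ⟨by simp [hf], ?_, ?_⟩
    · intro m n hm hn
      have hm' : (m:ℝ) ≠ 0 := by positivity
      have hn' : (n:ℝ) ≠ 0 := by
        have : (0:ℝ) < n := by exact_mod_cast hn
        exact this.ne'
      simp only [hf]
      rw [← Complex.exp_add]
      congr 1
      push_cast
      rw [Real.log_mul hm' hn']
      push_cast
      ring
    · intro n hn
      simp only [hf]
      rw [mul_comm, Complex.norm_exp_ofReal_mul_I]
  -- ratio tendsto
  have hratio : Tendsto (fun n : ℕ => ((a:ℝ)*n+b)/((c:ℝ)*n+d)) atTop (𝓝 ((a:ℝ)/c)) := by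
    have h1 : Tendsto (fun n : ℕ => ((a:ℝ) + b/n)/((c:ℝ) + d/n)) atTop (𝓝 ((a:ℝ)/c)) := by
      have hnum : Tendsto (fun n : ℕ => (a:ℝ) + (b:ℝ)/n) atTop (𝓝 ((a:ℝ)+0)) :=
        tendsto_const_nhds.add (tendsto_const_div_atTop_nhds_zero_nat _)
      have hden : Tendsto (fun n : ℕ => (c:ℝ) + (d:ℝ)/n) atTop (𝓝 ((c:ℝ)+0)) :=
        tendsto_const_nhds.add (tendsto_const_div_atTop_nhds_zero_nat _)
      rw [add_zero] at hnum hden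
      exact hnum.div hden hce.ne'
    refine h1.congr' ?_
    filter_upwards [eventually_ge_atTop 1] with n hn
    have hn' : (n:ℝ) ≠ 0 := by positivity
    field_simp
  have hlog : Tendsto (fun n : ℕ => Real.log (((a:ℝ)*n+b)/((c:ℝ)*n+d))) atTop
      (𝓝 (Real.log ((a:ℝ)/c))) :=
    ((Real.continuousAt_log hrpos.ne').tendsto).comp hratio
  have hth : Tendsto (fun n : ℕ => t * Real.log (((a:ℝ)*n+b)/((c:ℝ)*n+d))) atTop
      (𝓝 Real.pi) := by
    have := hlog.const_mul t
    rwa [ht, div_mul_cancel₀ _ hlogne] at this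
  have hF : Tendsto (fun n : ℕ =>
      ‖Complex.exp (Complex.I *
        ((t * Real.log (((a:ℝ)*n+b)/((c:ℝ)*n+d)) : ℝ) : ℂ)) - 1‖) atTop (𝓝 2) := by
    have hcont : Continuous (fun θ : ℝ =>
        ‖Complex.exp (Complex.I * (θ:ℂ)) - 1‖) := by
      continuity
    have := (hcont.tendsto Real.pi).comp hth
    have hval : ‖Complex.exp (Complex.I * ((Real.pi:ℝ) : ℂ)) - 1‖ = 2 := by
      rw [mul_comm, Complex.exp_pi_mul_I]
      norm_num
    rwa [Function.comp_def, hval] at this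
  obtain ⟨N0, hN0⟩ := eventually_atTop.mp (hF.eventually (eventually_gt_nhds one_lt_two))
  obtain ⟨n, hnN, hx, hy, habs⟩ := H f hfcm 1 one_pos N0
  set X : ℕ := ((a:ℤ)*n+b).toNat with hX
  set Y : ℕ := ((c:ℤ)*n+d).toNat with hY
  have hXz : ((X:ℤ)) = (a:ℤ)*n+b := Int.toNat_of_nonneg hx.le
  have hXr : (X:ℝ) = (a:ℝ)*n+b := by
    rw [← Int.cast_natCast, hXz]; push_cast; ring
  have hYz : ((Y:ℤ)) = (c:ℤ)*n+d := Int.toNat_of_nonneg hy.le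
  have hYr : (Y:ℝ) = (c:ℝ)*n+d := by
    rw [← Int.cast_natCast, hYz]; push_cast; ring
  have hXpos : (0:ℝ) < (X:ℝ) := by rw [hXr]; exact_mod_cast hx
  have hYpos : (0:ℝ) < (Y:ℝ) := by rw [hYr]; exact_mod_cast hy
  -- compute abs of difference
  have key : ‖f X - f Y‖ =
      ‖Complex.exp (Complex.I *
        ((t * Real.log (((a:ℝ)*n+b)/((c:ℝ)*n+d)) : ℝ) : ℂ)) - 1‖ := by
    have hsplit : f X - f Y = Complex.exp (Complex.I * ((t * Real.log Y : ℝ) : ℂ)) *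
        (Complex.exp (Complex.I * ((t * (Real.log X - Real.log Y) : ℝ) : ℂ)) - 1) := by
      simp only [hf]
      rw [mul_sub, mul_one, ← Complex.exp_add]
      congr 2
      push_cast
      ring
    have habs1 : ‖Complex.exp (Complex.I * ((t * Real.log Y : ℝ) : ℂ))‖ = 1 := by
      rw [mul_comm, Complex.norm_exp_ofReal_mul_I]
    rw [hsplit, norm_mul, habs1, one_mul,
      Real.log_div (by rw [← hXr]; exact hXpos.ne') (by rw [← hYr]; exact hYpos.ne'),
      ← hXr, ← hYr]
  have hgt := hN0 n hnN
  rw [← key] at hgt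
  exact absurd habs (by linarith)
end

section
/- Let a ∈ ℕ (a ≥ 1) and b, d ∈ ℤ with gcd(a,b,d) = 1 and b ≠ d, and assume that a does not divide b·d. Then there exists f ∈ 𝓜 such that liminf_{n→∞} |f(an+b) − f(an+d)| > 0 (the liminf taken over n with an+b > 0 and an+d > 0). -/
open Finset in
lemma norm_one_of_pow_eq_one {z : ℂ} {N : ℕ} (hN : N ≠ 0) (h : z ^ N = 1) :
    ‖z‖ = 1 := by
  simpa using Complex.norm_eq_one_of_pow_eq_one h hN

lemma norm_one_sub_pow_le {z : ℂ} (hz : ‖z‖ = 1) (k : ℕ) :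
    ‖1 - z ^ k‖ ≤ k * ‖1 - z‖ := by
  induction k with
  | zero => simp
  | succ k ih =>
    have : (1 : ℂ) - z ^ (k+1) = (1 - z ^ k) + z ^ k * (1 - z) := by ring
    rw [this]
    calc ‖(1 - z ^ k) + z ^ k * (1 - z)‖
        ≤ ‖1 - z ^ k‖ + ‖z ^ k * (1 - z)‖ := norm_add_le _ _
      _ ≤ k * ‖1 - z‖ + 1 * ‖1 - z‖ := by
          rw [norm_mul, norm_pow, hz, one_pow]
          exact add_le_add ih (le_refl _)
      _ = (k + 1 : ℕ) * ‖1 - z‖ := by push_cast; ring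

open Finset in
lemma key_lower {z : ℂ} {N : ℕ} (hN : 1 ≤ N) (hzN : z ^ N = 1) (hz : z ≠ 1) :
    (1:ℝ)/N ≤ ‖z - 1‖ := by
  have habs : ‖z‖ = 1 := norm_one_of_pow_eq_one (by omega) hzN
  have hsum : ∑ i ∈ range N, z ^ i = 0 := by
    rw [geom_sum_eq hz, hzN, sub_self, zero_div]
  have hNsum : (N : ℂ) = ∑ i ∈ range N, (1 - z ^ i) := by
    rw [Finset.sum_sub_distrib, hsum, sub_zero, Finset.sum_const, card_range, nsmul_eq_mul,
      mul_one]
  have h1 : (N : ℝ) ≤ ∑ i ∈ range N, (i : ℝ) * ‖1 - z‖ := by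
    calc (N : ℝ) = ‖(N : ℂ)‖ := by
          rw [Complex.norm_natCast]
      _ = ‖∑ i ∈ range N, (1 - z ^ i)‖ := by rw [← hNsum]
      _ ≤ ∑ i ∈ range N, ‖1 - z ^ i‖ := norm_sum_le _ _
      _ ≤ ∑ i ∈ range N, (i : ℝ) * ‖1 - z‖ := by
          exact Finset.sum_le_sum fun i _ => norm_one_sub_pow_le habs i
  have h2 : ∑ i ∈ range N, (i : ℝ) * ‖1 - z‖ ≤ (N:ℝ) * N * ‖1 - z‖ := by
    rw [← Finset.sum_mul]
    have : ∑ i ∈ range N, (i:ℝ) ≤ (N:ℝ) * N := by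
      calc ∑ i ∈ range N, (i:ℝ) ≤ ∑ _i ∈ range N, (N:ℝ) := by
            exact Finset.sum_le_sum fun i hi => by
              exact_mod_cast (Nat.le_of_lt (Finset.mem_range.mp hi)).trans (le_refl N)
        _ = (N:ℝ) * N := by rw [Finset.sum_const, card_range, nsmul_eq_mul]
    exact mul_le_mul_of_nonneg_right this (norm_nonneg _)
  have hNpos : (0:ℝ) < N := by exact_mod_cast hN
  rw [div_le_iff₀ hNpos]
  have := h1.trans h2
  rw [show ‖z - 1‖ = ‖1 - z‖ by rw [norm_sub_rev]]
  nlinarith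

lemma one_add_sq_zero_pow {R : Type*} [CommRing R] {x : R} (hx : x * x = 0) (j : ℕ) :
    (1 + x) ^ j = 1 + (j : R) * x := by
  induction j with
  | zero => simp
  | succ j ih =>
    have hm : (1 + (j:R)*x) * (1+x) = 1 + ((j:R)+1)*x + (j:R)*(x*x) := by ring
    rw [pow_succ, ih, hm, hx, mul_zero, add_zero]
    push_cast
    ring

open Classical in
noncomputable def chiF (M : ℕ) (ψ : (ZMod M)ˣ →* ℂˣ) (u : ℕ) : ℂ :=
  if h : IsUnit ((u : ZMod M)) then (ψ h.unit : ℂ) else 1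

noncomputable def FF (p M : ℕ) (ψ : (ZMod M)ˣ →* ℂˣ) (ω : ℂ) (n : ℕ) : ℂ :=
  ω ^ (n.factorization p) * chiF M ψ (n / p ^ n.factorization p)

lemma chiF_unit {M : ℕ} (ψ : (ZMod M)ˣ →* ℂˣ) {u : ℕ} (h : IsUnit ((u : ZMod M))) :
    chiF M ψ u = ψ h.unit := by unfold chiF; exact dif_pos h

lemma psi_apply_norm {M : ℕ} [NeZero M] (ψ : (ZMod M)ˣ →* ℂˣ) (x : (ZMod M)ˣ) :
    ‖((ψ x : ℂˣ) : ℂ)‖ = 1 := by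
  have hcard : Fintype.card (ZMod M)ˣ ≠ 0 := Fintype.card_ne_zero
  have h : ((ψ x : ℂˣ) : ℂ) ^ (Fintype.card (ZMod M)ˣ) = 1 := by
    rw [← Units.val_pow_eq_pow_val, ← map_pow, pow_card_eq_one, map_one, Units.val_one]
  simpa using Complex.norm_eq_one_of_pow_eq_one h hcard

lemma isUnit_natCast_pp {p K u : ℕ} (hp : p.Prime) (hu : ¬ p ∣ u) :
    IsUnit ((u : ZMod (p ^ K))) := by
  haveI : NeZero (p ^ K) := ⟨pow_ne_zero K hp.pos.ne'⟩
  exact (ZMod.isUnit_iff_coprime u (p ^ K)).mpr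
    (Nat.Coprime.pow_right K (((Nat.Prime.coprime_iff_not_dvd hp).mpr hu).symm))

lemma chiF_mul {p K : ℕ} (hp : p.Prime) (ψ : (ZMod (p ^ K))ˣ →* ℂˣ) {u v : ℕ}
    (hu : ¬ p ∣ u) (hv : ¬ p ∣ v) :
    chiF (p ^ K) ψ (u * v) = chiF (p ^ K) ψ u * chiF (p ^ K) ψ v := by
  have h1 := isUnit_natCast_pp (K := K) hp hu
  have h2 := isUnit_natCast_pp (K := K) hp hv
  have h12 : IsUnit (((u * v : ℕ) : ZMod (p ^ K))) := by
    rw [Nat.cast_mul]; exact h1.mul h2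
  have he : h12.unit = h1.unit * h2.unit := by
    apply Units.ext
    rw [IsUnit.unit_spec, Units.val_mul, IsUnit.unit_spec, IsUnit.unit_spec, Nat.cast_mul]
  rw [chiF_unit ψ h1, chiF_unit ψ h2, chiF_unit ψ h12, he, map_mul, Units.val_mul]

lemma chiF_one {M : ℕ} (ψ : (ZMod M)ˣ →* ℂˣ) : chiF M ψ 1 = 1 := by
  have h : IsUnit ((1 : ℕ) : ZMod M) := by rw [Nat.cast_one]; exact isUnit_one
  rw [chiF_unit ψ h]
  have : h.unit = 1 := by apply Units.ext; rw [IsUnit.unit_spec, Nat.cast_one, Units.val_one]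
  rw [this, map_one, Units.val_one]

lemma FF_isUnitCM {p K : ℕ} (hp : p.Prime) (ψ : (ZMod (p ^ K))ˣ →* ℂˣ) {ω : ℂ}
    (hω : ‖ω‖ = 1) : IsUnitCM (FF p (p ^ K) ψ ω) := by
  haveI : NeZero (p ^ K) := ⟨pow_ne_zero K hp.pos.ne'⟩
  refine ⟨?_, ?_, ?_⟩
  · simp [FF, Nat.factorization_one, chiF_one]
  · intro m n hm hn
    have hm0 : m ≠ 0 := by omega
    have hn0 : n ≠ 0 := by omega
    unfold FF
    rw [show m * n / p ^ (m * n).factorization p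
        = (m / p ^ m.factorization p) * (n / p ^ n.factorization p) from Nat.ordCompl_mul m n p,
      chiF_mul hp ψ (Nat.not_dvd_ordCompl hp hm0) (Nat.not_dvd_ordCompl hp hn0),
      Nat.factorization_mul hm0 hn0]
    simp only [Finsupp.add_apply, pow_add]
    ring
  · intro n hn
    have hn0 : n ≠ 0 := by omega
    unfold FF
    rw [norm_mul, norm_pow, hω, one_pow, one_mul,
      chiF_unit ψ (isUnit_natCast_pp (K := K) hp (Nat.not_dvd_ordCompl hp hn0))]
    exact psi_apply_norm ψ _

lemma FF_eval {p K : ℕ} (hp : p.Prime) (ψ : (ZMod (p ^ K))ˣ →* ℂˣ) (ω : ℂ)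
    {β : ℕ} {x y : ℤ} (hx : 0 < x) (hxy : x = (p : ℤ) ^ β * y) (hy : ¬ (p : ℤ) ∣ y)
    (h : IsUnit ((y : ZMod (p ^ K)))) :
    FF p (p ^ K) ψ ω x.toNat = ω ^ β * ((ψ h.unit : ℂˣ) : ℂ) := by
  have hp0 : (0 : ℤ) < (p : ℤ) := by exact_mod_cast hp.pos
  have hppos : (0 : ℤ) < (p : ℤ) ^ β := by positivity
  have hy0 : 0 < y := by nlinarith
  set u : ℕ := y.toNat with hu
  have hyu : (u : ℤ) = y := Int.toNat_of_nonneg hy0.le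
  have hu0 : u ≠ 0 := by omega
  have hpu : ¬ p ∣ u := by
    intro hdvd
    exact hy (by rw [← hyu]; exact_mod_cast Int.natCast_dvd_natCast.mpr hdvd)
  have hxt : x.toNat = p ^ β * u := by
    have h1 : ((p ^ β * u : ℕ) : ℤ) = x := by push_cast; rw [hyu]; exact hxy.symm
    omega
  have hfact : (p ^ β * u).factorization p = β := by
    rw [Nat.factorization_mul (pow_ne_zero β hp.pos.ne') hu0, Nat.Prime.factorization_pow hp,
      Finsupp.add_apply, Finsupp.single_eq_same, Nat.factorization_eq_zero_of_not_dvd hpu]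
    omega
  have hord : (p ^ β * u) / p ^ ((p ^ β * u).factorization p) = u := by
    rw [hfact, Nat.mul_div_cancel_left _ (pow_pos hp.pos β)]
  have hcast : ((u : ℕ) : ZMod (p ^ K)) = ((y : ℤ) : ZMod (p ^ K)) := by
    rw [← hyu]; push_cast; rfl
  have h' : IsUnit ((u : ZMod (p ^ K))) := by rw [hcast]; exact h
  have hunit : h'.unit = h.unit := by
    apply Units.ext
    rw [IsUnit.unit_spec, IsUnit.unit_spec, hcast]
  unfold FF
  rw [hxt, hord, hfact, chiF_unit ψ h', hunit]

lemma isUnit_natCast_pp' {p K u : ℕ} (hp : p.Prime) (hu : ¬ p ∣ u) :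
    IsUnit ((u : ZMod (p ^ K))) := by
  haveI : NeZero (p ^ K) := ⟨pow_ne_zero K hp.pos.ne'⟩
  exact (ZMod.isUnit_iff_coprime u (p ^ K)).mpr
    (Nat.Coprime.pow_right K (((Nat.Prime.coprime_iff_not_dvd hp).mpr hu).symm))

/-- Decompose a nonzero integer as sign-carrying `p`-power times a `p`-free part. -/
lemma int_decomp {p : ℕ} (hp : p.Prime) {z : ℤ} (hz : z ≠ 0) :
    ∃ z₁ : ℤ, z = (p : ℤ) ^ (z.natAbs.factorization p) * z₁ ∧ ¬ (p : ℤ) ∣ z₁ := by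
  set β := z.natAbs.factorization p
  have hnz : z.natAbs ≠ 0 := Int.natAbs_ne_zero.mpr hz
  have hsplit : z.natAbs = p ^ β * (z.natAbs / p ^ β) :=
    (Nat.ordProj_mul_ordCompl_eq_self z.natAbs p).symm
  refine ⟨Int.sign z * (z.natAbs / p ^ β : ℕ), ?_, ?_⟩
  · calc z = Int.sign z * (z.natAbs : ℤ) := (Int.sign_mul_natAbs z).symm
      _ = Int.sign z * ((p ^ β * (z.natAbs / p ^ β) : ℕ) : ℤ) := by rw [← hsplit]
      _ = (p : ℤ) ^ β * (Int.sign z * (z.natAbs / p ^ β : ℕ)) := by push_cast; ring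
  · intro hdvd
    have h1 : p ∣ (Int.sign z * ((z.natAbs / p ^ β : ℕ) : ℤ)).natAbs := Int.natCast_dvd.mp hdvd
    rw [Int.natAbs_mul, Int.natAbs_sign_of_ne_zero hz, one_mul, Int.natAbs_natCast] at h1
    exact Nat.not_dvd_ordCompl hp hnz h1

lemma isUnit_intCast_pp {p K : ℕ} (hp : p.Prime) {y : ℤ} (hy : ¬ (p : ℤ) ∣ y) :
    IsUnit ((y : ZMod (p ^ K))) := by
  have hy' : ¬ p ∣ y.natAbs := fun h => hy (Int.natCast_dvd.mpr h)
  have hu := isUnit_natCast_pp' (K := K) hp hy'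
  rcases Int.natAbs_eq y with h | h
  · rw [h, Int.cast_natCast]; exact hu
  · rw [h, Int.cast_neg, Int.cast_natCast]; exact hu.neg

theorem stmt3 (a : ℕ) (ha : 1 ≤ a) (b d : ℤ)
    (hgcd : Int.gcd (Int.gcd (a : ℤ) b : ℤ) d = 1)
    (hbd : b ≠ d) (hnd : ¬ ((a : ℤ) ∣ b * d)) :
    ∃ f : ℕ → ℂ, IsUnitCM f ∧ ∃ δ : ℝ, 0 < δ ∧ ∃ N : ℕ, ∀ n, N ≤ n →
      0 < (a : ℤ) * n + b → 0 < (a : ℤ) * n + d →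
      δ ≤ ‖f (((a : ℤ) * n + b).toNat) - f (((a : ℤ) * n + d).toNat)‖ := by
  classical
  have hbd0 : b * d ≠ 0 := fun h => hnd (h ▸ dvd_zero _)
  have hb0 : b ≠ 0 := fun h => hbd0 (by rw [h, zero_mul])
  have hd0 : d ≠ 0 := fun h => hbd0 (by rw [h, mul_zero])
  have ha0 : a ≠ 0 := by omega
  have habs0 : (b * d).natAbs ≠ 0 := Int.natAbs_ne_zero.mpr hbd0
  -- find the prime p
  obtain ⟨p, hplt⟩ : ∃ p, (b * d).natAbs.factorization p < a.factorization p := by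
    by_contra hcon
    push_neg at hcon
    exact hnd (Int.natCast_dvd.mpr
      ((Nat.factorization_le_iff_dvd ha0 habs0).mp (Finsupp.le_def.mpr hcon)))
  have hp : p.Prime := by
    refine Nat.prime_of_mem_primeFactors (n := a) ?_
    rw [← Nat.support_factorization]
    exact Finsupp.mem_support_iff.mpr (by omega)
  set e := a.factorization p with he
  set β := b.natAbs.factorization p with hβ
  set δ := d.natAbs.factorization p with hδ
  have hβδ : β + δ < e := by
    have : (b * d).natAbs.factorization p = β + δ := by
      rw [Int.natAbs_mul, Nat.factorization_mul (Int.natAbs_ne_zero.mpr hb0)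
        (Int.natAbs_ne_zero.mpr hd0), Finsupp.add_apply]
    omega
  have hβe : β < e := by omega
  have hδe : δ < e := by omega
  obtain ⟨b₁, hb₁, hpb₁⟩ := int_decomp hp hb0
  obtain ⟨d₁, hd₁, hpd₁⟩ := int_decomp hp hd0
  rw [← hβ] at hb₁
  rw [← hδ] at hd₁
  -- cofactors of p-powers in a
  have hcof : ∀ κ : ℕ, κ < e → a = p ^ κ * (a / p ^ κ) ∧ p ^ (e - κ) ∣ (a / p ^ κ) ∧
      p ∣ (a / p ^ κ) := by
    intro κ hκ
    have hpκa : p ^ κ ∣ a := dvd_trans (pow_dvd_pow p hκ.le) (Nat.ordProj_dvd a p)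
    have haA : a = p ^ κ * (a / p ^ κ) := (Nat.mul_div_cancel' hpκa).symm
    have hAe : p ^ (e - κ) ∣ (a / p ^ κ) := by
      obtain ⟨a₀, ha₀⟩ := Nat.ordProj_dvd a p
      have h2 : p ^ κ * (a / p ^ κ) = p ^ κ * (p ^ (e - κ) * a₀) := by
        rw [← haA, ha₀, ← mul_assoc, ← pow_add]
        congr 2
        omega
      exact ⟨a₀, Nat.eq_of_mul_eq_mul_left (pow_pos hp.pos κ) h2⟩
    exact ⟨haA, hAe, dvd_trans (dvd_pow_self p (by omega : e - κ ≠ 0)) hAe⟩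
  obtain ⟨haA, hAe, hpA⟩ := hcof β hβe
  obtain ⟨haA', hAe', hpA'⟩ := hcof δ hδe
  set A := a / p ^ β with hA
  set A' := a / p ^ δ with hA'
  -- key linear identities
  have hkey_b : ∀ n : ℕ, (a : ℤ) * n + b = (p : ℤ) ^ β * ((A : ℤ) * n + b₁) := by
    intro n
    have : (a : ℤ) = (p : ℤ) ^ β * (A : ℤ) := by exact_mod_cast congrArg (Nat.cast : ℕ → ℤ) haA
    rw [this, hb₁]; ring
  have hkey_d : ∀ n : ℕ, (a : ℤ) * n + d = (p : ℤ) ^ δ * ((A' : ℤ) * n + d₁) := by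
    intro n
    have : (a : ℤ) = (p : ℤ) ^ δ * (A' : ℤ) := by exact_mod_cast congrArg (Nat.cast : ℕ → ℤ) haA'
    rw [this, hd₁]; ring
  have hnd2 : ∀ (C : ℕ) (z₁ : ℤ), p ∣ C → ¬ (p : ℤ) ∣ z₁ → ∀ n : ℕ,
      ¬ (p : ℤ) ∣ ((C : ℤ) * n + z₁) := by
    intro C z₁ hC hz₁ n hdvd
    have h1 : (p : ℤ) ∣ (C : ℤ) * n := Dvd.dvd.mul_right (Int.natCast_dvd_natCast.mpr hC) n
    exact hz₁ (by simpa using dvd_sub hdvd h1)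
  have hub := hnd2 A b₁ hpA hpb₁
  have hud := hnd2 A' d₁ hpA' hpd₁
  by_cases hcase : β = δ
  case neg =>
    -- Case A : distinct valuations; use f(n) = ω^(v_p n)
    set R := max β δ + 1 with hR
    set ω : ℂ := Complex.exp (2 * Real.pi * Complex.I / R) with hω
    have hprim : IsPrimitiveRoot ω R := Complex.isPrimitiveRoot_exp R (by omega)
    have hω1 : ‖ω‖ = 1 := norm_one_of_pow_eq_one (N := R) (by omega) hprim.pow_eq_one
    set ψ : (ZMod (p ^ 1))ˣ →* ℂˣ := 1 with hψ
    refine ⟨FF p (p ^ 1) ψ ω, FF_isUnitCM hp ψ hω1, 1 / R, by positivity, 0, ?_⟩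
    intro n _ hbpos hdpos
    have hbu := isUnit_intCast_pp (K := 1) hp (hub n)
    have hdu := isUnit_intCast_pp (K := 1) hp (hud n)
    rw [FF_eval hp ψ ω hbpos (hkey_b n) (hub n) hbu,
      FF_eval hp ψ ω hdpos (hkey_d n) (hud n) hdu]
    have h1 : ((ψ hbu.unit : ℂˣ) : ℂ) = 1 := by rw [hψ]; rfl
    have h2 : ((ψ hdu.unit : ℂˣ) : ℂ) = 1 := by rw [hψ]; rfl
    rw [h1, h2, mul_one, mul_one]
    -- lower bound for |ω^β - ω^δ|
    have hωδ0 : ω ^ δ ≠ 0 := pow_ne_zero δ (by intro h0; rw [h0] at hω1; simp at hω1)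
    set z : ℂ := ω ^ β / ω ^ δ with hz
    have hzR : z ^ R = 1 := by
      rw [hz, div_pow, ← pow_mul, ← pow_mul, mul_comm β R, mul_comm δ R, pow_mul, pow_mul,
        hprim.pow_eq_one, one_pow, one_pow, div_one]
    have hz1 : z ≠ 1 := by
      intro h
      have : ω ^ β = ω ^ δ := by
        rw [hz, div_eq_one_iff_eq hωδ0] at h
        exact h
      exact hcase (hprim.pow_inj (by omega) (by omega) this)
    have hkl := key_lower (N := R) (by omega) hzR hz1
    have hfact : ω ^ β - ω ^ δ = ω ^ δ * (z - 1) := by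
      rw [hz, mul_sub, mul_one, mul_comm, div_mul_cancel₀ _ hωδ0]
    rw [hfact, norm_mul, norm_pow, hω1, one_pow, one_mul]
    exact hkl
  case pos =>
    -- Case B : equal valuations
    set c : ℤ := d₁ - b₁ with hc
    have hc0 : c ≠ 0 := by
      intro h
      apply hbd
      have h1 : b₁ = d₁ := by
        have : d₁ - b₁ = 0 := h
        omega
      rw [hb₁, hd₁, ← hcase, h1]
    set γ := c.natAbs.factorization p with hγ
    obtain ⟨c₁, hc₁, hpc₁⟩ := int_decomp hp hc0
    rw [← hγ] at hc₁
    set K := γ + 1 with hK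
    haveI : NeZero (p ^ K) := ⟨pow_ne_zero K hp.pos.ne'⟩
    have hMc : ¬ ((p ^ K : ℕ) : ℤ) ∣ c := by
      intro hdvd
      exact Nat.pow_succ_factorization_not_dvd (Int.natAbs_ne_zero.mpr hc0) hp
        (Int.natCast_dvd.mp hdvd)
    have SEP : ∃ ψ : (ZMod (p ^ K))ˣ →* ℂˣ, ∀ (n : ℕ) (w U : (ZMod (p ^ K))ˣ),
        ((U : ZMod (p ^ K)) = (((A : ℤ) * n + b₁ : ℤ) : ZMod (p ^ K))) →
        ((w : ZMod (p ^ K)) * (U : ZMod (p ^ K))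
          = (U : ZMod (p ^ K)) + ((c : ℤ) : ZMod (p ^ K))) →
        ψ w ≠ 1 := by
      haveI : NeZero ((Monoid.exponent (ZMod (p ^ K))ˣ : ℂ)) :=
        ⟨by exact_mod_cast Monoid.exponent_ne_zero_of_finite⟩
      by_cases hsub : p ^ K ∣ A
      · -- residues of U, U' are constant mod p^K
        set ub₀ := (isUnit_intCast_pp (K := K) hp hpb₁).unit with hub₀
        set ud₀ := (isUnit_intCast_pp (K := K) hp hpd₁).unit with hud₀
        have hg₀ : ud₀ * ub₀⁻¹ ≠ 1 := by
          intro h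
          have h2 : ud₀ = ub₀ := by rwa [mul_inv_eq_one] at h
          have h3 : ((d₁ : ℤ) : ZMod (p ^ K)) = ((b₁ : ℤ) : ZMod (p ^ K)) := by
            have := congrArg Units.val h2
            rwa [hud₀, hub₀, IsUnit.unit_spec, IsUnit.unit_spec] at this
          rw [ZMod.intCast_eq_intCast_iff] at h3
          have h4 := Int.ModEq.dvd h3
          apply hMc
          have h5 : c = -(b₁ - d₁) := by rw [hc]; ring
          rw [h5]
          exact dvd_neg.mpr h4
        obtain ⟨ψ, hψ⟩ := CommGroup.exists_apply_ne_one_of_hasEnoughRootsOfUnity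
          (ZMod (p ^ K))ˣ ℂ hg₀
        refine ⟨ψ, ?_⟩
        intro n w U hU hwU
        have hA0' : ((A : ℕ) : ZMod (p ^ K)) = 0 :=
          (ZMod.natCast_eq_zero_iff _ _).mpr hsub
        have hUval : (U : ZMod (p ^ K)) = ((b₁ : ℤ) : ZMod (p ^ K)) := by
          rw [hU]; push_cast; rw [hA0']; ring
        have hUb : U = ub₀ := by
          apply Units.ext
          rw [hUval, hub₀, IsUnit.unit_spec]
        have hwmul : w * U = ud₀ := by
          apply Units.ext
          rw [Units.val_mul, hwU, hUval, hud₀, IsUnit.unit_spec, hc]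
          push_cast
          ring
        have hwg : w = ud₀ * ub₀⁻¹ := by
          have h6 : w * U = (ud₀ * ub₀⁻¹) * U := by
            rw [hwmul, hUb, inv_mul_cancel_right]
          exact mul_right_cancel h6
        rw [hwg]
        exact hψ
      · -- varying residues : w lies in 1 + p^γ * units
        have heβγ : e - β ≤ γ := by
          by_contra hcon
          exact hsub (dvd_trans (pow_dvd_pow p (by omega)) hAe)
        have hγ1 : 1 ≤ γ := by omega
        have hpg : ¬ p ∣ (1 + p ^ γ) := by
          intro hdvd
          have h7 : p ∣ 1 := (Nat.dvd_add_right (dvd_pow_self p (by omega : γ ≠ 0))).mp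
            (by rwa [Nat.add_comm] at hdvd)
          have h8 : p = 1 := Nat.dvd_one.mp h7
          have h9 := hp.one_lt
          omega
        set g₀ := (isUnit_natCast_pp' (K := K) hp hpg).unit with hg₀def
        have hg₀ : g₀ ≠ 1 := by
          intro h
          have h2 : (((1 + p ^ γ : ℕ) : ZMod (p ^ K))) = 1 := by
            have := congrArg Units.val h
            rwa [hg₀def, IsUnit.unit_spec, Units.val_one] at this
          have h3 : ((p ^ γ : ℕ) : ZMod (p ^ K)) = 0 := by
            push_cast at h2 ⊢
            linear_combination h2
          rw [ZMod.natCast_eq_zero_iff] at h3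
          have h4 := (Nat.pow_dvd_pow_iff_le_right hp.one_lt).mp h3
          omega
        obtain ⟨ψ, hψ⟩ := CommGroup.exists_apply_ne_one_of_hasEnoughRootsOfUnity
          (ZMod (p ^ K))ˣ ℂ hg₀
        refine ⟨ψ, ?_⟩
        intro n w U hU hwU
        set t := (isUnit_intCast_pp (K := K) hp hpc₁).unit with ht
        set s := t * U⁻¹ with hs
        have hppow0 : ((p : ZMod (p ^ K))) ^ γ * ((p : ZMod (p ^ K))) ^ γ = 0 := by
          rw [← pow_add]
          have h5 : ((p ^ (γ + γ) : ℕ) : ZMod (p ^ K)) = 0 :=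
            (ZMod.natCast_eq_zero_iff _ _).mpr (pow_dvd_pow p (by omega))
          push_cast at h5
          exact h5
        set x : ZMod (p ^ K) := (p : ZMod (p ^ K)) ^ γ * ((s : (ZMod (p ^ K))ˣ) : ZMod (p ^ K))
          with hx
        have hx2 : x * x = 0 := by
          rw [hx]
          calc ((p : ZMod (p ^ K)) ^ γ * (s : ZMod (p ^ K)))
                * ((p : ZMod (p ^ K)) ^ γ * (s : ZMod (p ^ K)))
              = ((p : ZMod (p ^ K)) ^ γ * (p : ZMod (p ^ K)) ^ γ)
                * ((s : ZMod (p ^ K)) * (s : ZMod (p ^ K))) := by ring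
            _ = 0 := by rw [hppow0, zero_mul]
        have hcval : ((c : ℤ) : ZMod (p ^ K))
            = (p : ZMod (p ^ K)) ^ γ * ((c₁ : ℤ) : ZMod (p ^ K)) := by
          rw [hc₁]; push_cast; ring
        have hwval : (w : ZMod (p ^ K)) = 1 + x := by
          have h1 : (w : ZMod (p ^ K))
                * ((U : ZMod (p ^ K)) * ((U⁻¹ : (ZMod (p ^ K))ˣ) : ZMod (p ^ K)))
              = ((U : ZMod (p ^ K)) + ((c : ℤ) : ZMod (p ^ K)))
                * ((U⁻¹ : (ZMod (p ^ K))ˣ) : ZMod (p ^ K)) := by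
            rw [← mul_assoc, hwU]
          rw [Units.mul_inv, mul_one] at h1
          rw [h1, hcval, hx, hs, Units.val_mul, ht, IsUnit.unit_spec]
          have h2 : (U : ZMod (p ^ K)) * ((U⁻¹ : (ZMod (p ^ K))ˣ) : ZMod (p ^ K)) = 1 :=
            Units.mul_inv U
          calc ((U : ZMod (p ^ K)) + (p : ZMod (p ^ K)) ^ γ * ((c₁ : ℤ) : ZMod (p ^ K)))
                * ((U⁻¹ : (ZMod (p ^ K))ˣ) : ZMod (p ^ K))
              = (U : ZMod (p ^ K)) * ((U⁻¹ : (ZMod (p ^ K))ˣ) : ZMod (p ^ K))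
                + (p : ZMod (p ^ K)) ^ γ * (((c₁ : ℤ) : ZMod (p ^ K))
                  * ((U⁻¹ : (ZMod (p ^ K))ˣ) : ZMod (p ^ K))) := by ring
            _ = 1 + (p : ZMod (p ^ K)) ^ γ * (((c₁ : ℤ) : ZMod (p ^ K))
                  * ((U⁻¹ : (ZMod (p ^ K))ˣ) : ZMod (p ^ K))) := by rw [h2]
        set j := ((s⁻¹ : (ZMod (p ^ K))ˣ) : ZMod (p ^ K)).val with hj
        have hwj : w ^ j = g₀ := by
          apply Units.ext
          rw [Units.val_pow_eq_pow_val, hwval, one_add_sq_zero_pow hx2 j]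
          have hjcast : ((j : ℕ) : ZMod (p ^ K)) = ((s⁻¹ : (ZMod (p ^ K))ˣ) : ZMod (p ^ K)) := by
            rw [hj, ZMod.natCast_val, ZMod.cast_id]
          rw [hjcast, hx, hg₀def, IsUnit.unit_spec]
          have h3 : ((s⁻¹ : (ZMod (p ^ K))ˣ) : ZMod (p ^ K))
                * ((p : ZMod (p ^ K)) ^ γ * (s : ZMod (p ^ K)))
              = (p : ZMod (p ^ K)) ^ γ
                * ((s : ZMod (p ^ K)) * ((s⁻¹ : (ZMod (p ^ K))ˣ) : ZMod (p ^ K))) := by ring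
          rw [h3, Units.mul_inv, mul_one]
          push_cast
          ring
        intro hone
        apply hψ
        rw [← hwj, map_pow, hone, one_pow]
    obtain ⟨ψ, hψ⟩ := SEP
    refine ⟨FF p (p ^ K) ψ 1, FF_isUnitCM hp ψ (by simp),
      1 / (Fintype.card (ZMod (p ^ K))ˣ),
      by positivity, 0, ?_⟩
    intro n _ hbpos hdpos
    have hbu := isUnit_intCast_pp (K := K) hp (hub n)
    have hdu := isUnit_intCast_pp (K := K) hp (hud n)
    rw [FF_eval hp ψ 1 hbpos (hkey_b n) (hub n) hbu,
      FF_eval hp ψ 1 hdpos (hkey_d n) (hud n) hdu]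
    simp only [one_pow, one_mul]
    set Ub := hbu.unit with hUb
    set Ud := hdu.unit with hUd
    set w := Ud * Ub⁻¹ with hw
    have hUbval : (Ub : ZMod (p ^ K)) = (((A : ℤ) * n + b₁ : ℤ) : ZMod (p ^ K)) :=
      IsUnit.unit_spec hbu
    have hAA : (A' : ℤ) = (A : ℤ) := by
      have : A' = A := by rw [hA, hA', hcase]
      exact_mod_cast congrArg (Nat.cast : ℕ → ℤ) this
    have hwU : (w : ZMod (p ^ K)) * (Ub : ZMod (p ^ K))
        = (Ub : ZMod (p ^ K)) + ((c : ℤ) : ZMod (p ^ K)) := by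
      have h1 : w * Ub = Ud := by rw [hw, inv_mul_cancel_right]
      have h2 : ((w * Ub : (ZMod (p ^ K))ˣ) : ZMod (p ^ K)) = (Ud : ZMod (p ^ K)) := by rw [h1]
      rw [Units.val_mul] at h2
      have hint : ((A' : ℤ) * n + d₁) = ((A : ℤ) * n + b₁) + c := by
        rw [hAA, hc]; ring
      rw [h2, hUbval, hUd, IsUnit.unit_spec, hint]
      push_cast
      ring
    have hψw := hψ n w Ub hUbval hwU
    set z : ℂ := ((ψ w : ℂˣ) : ℂ) with hz
    have hz1 : z ≠ 1 := fun h => hψw (Units.val_eq_one.mp (by rw [← hz, h]))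
    have hcard : 1 ≤ Fintype.card (ZMod (p ^ K))ˣ := Fintype.card_pos
    have hzN : z ^ (Fintype.card (ZMod (p ^ K))ˣ) = 1 := by
      rw [hz, ← Units.val_pow_eq_pow_val, ← map_pow, pow_card_eq_one, map_one, Units.val_one]
    have hkl := key_lower hcard hzN hz1
    have hrel : ((ψ Ud : ℂˣ) : ℂ) = z * ((ψ Ub : ℂˣ) : ℂ) := by
      rw [hz, ← Units.val_mul, ← map_mul, hw, inv_mul_cancel_right]
    have hdiff : ((ψ Ub : ℂˣ) : ℂ) - ((ψ Ud : ℂˣ) : ℂ) = ((ψ Ub : ℂˣ) : ℂ) * (1 - z) := by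
      rw [hrel]; ring
    rw [hdiff, norm_mul, psi_apply_norm, one_mul]
    rw [show ‖1 - z‖ = ‖z - 1‖ by rw [norm_sub_rev]]
    exact hkl
end

section
/- There exist f, g ∈ 𝓜 such that liminf_{n→∞} |f(n+2) − g(n)| > 0. -/
open Complex Finset

noncomputable def cw : ℂ := Complex.exp ((2 * Real.pi / 3 : ℝ) * Complex.I)

lemma cw_pow_three : cw ^ 3 = 1 := by
  rw [cw, ← Complex.exp_nat_mul]
  rw [show ((3 : ℕ) : ℂ) * (((2 * Real.pi / 3 : ℝ)) * Complex.I) = 2 * (Real.pi : ℂ) * Complex.I by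
    push_cast; ring]
  exact Complex.exp_two_pi_mul_I

lemma cw_ne_one : cw ≠ 1 := by
  intro h
  rw [cw, Complex.exp_eq_one_iff] at h
  obtain ⟨k, hk⟩ := h
  have him := congrArg Complex.im hk
  simp [Complex.mul_im] at him
  have hpi := Real.pi_pos
  have h3 : (3 : ℝ) * k = 1 := by
    field_simp at him
    nlinarith
  have h3' : (3 * k : ℤ) = 1 := by exact_mod_cast h3
  omega

lemma cw_abs : ‖cw‖ = 1 := Complex.norm_exp_ofReal_mul_I _

/-- the function: χ₄ of the odd part times c ^ (2-adic valuation) -/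
noncomputable def fF (c : ℂ) (n : ℕ) : ℂ :=
  ((ZMod.χ₄ ((ordCompl[2] n : ℕ) : ZMod 4) : ℤ) : ℂ) * c ^ (n.factorization 2)

lemma chi4_pm {m : ℕ} (hm : m % 2 = 1) :
    (ZMod.χ₄ (m : ZMod 4) : ℤ) = 1 ∨ (ZMod.χ₄ (m : ZMod 4) : ℤ) = -1 := by
  rw [ZMod.χ₄_nat_eq_if_mod_four, if_neg (by omega)]
  split
  · left; rfl
  · right; rfl

lemma chi4_sq {m : ℕ} (hm : m % 2 = 1) : ((ZMod.χ₄ (m : ZMod 4) : ℤ) : ℂ) ^ 2 = 1 := by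
  rcases chi4_pm hm with h | h <;> rw [h] <;> norm_num

lemma ordCompl_odd {n : ℕ} (hn : n ≠ 0) : (ordCompl[2] n) % 2 = 1 := by
  have := Nat.not_dvd_ordCompl Nat.prime_two hn
  omega

lemma fF_one (c : ℂ) : fF c 1 = 1 := by
  simp [fF]

lemma fF_mul (c : ℂ) {m n : ℕ} (hm : m ≠ 0) (hn : n ≠ 0) :
    fF c (m * n) = fF c m * fF c n := by
  have h2 : ordCompl[2] (m * n) = ordCompl[2] m * ordCompl[2] n := Nat.ordCompl_mul m n 2
  have h1 : (m * n).factorization 2 = m.factorization 2 + n.factorization 2 := by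
    rw [Nat.factorization_mul hm hn]; rfl
  unfold fF
  rw [h2, h1]
  push_cast [map_mul, pow_add]
  ring

lemma fF_abs {c : ℂ} (hc : ‖c‖ = 1) {n : ℕ} (hn : n ≠ 0) :
    ‖fF c n‖ = 1 := by
  unfold fF
  rw [norm_mul, norm_pow, hc, one_pow, mul_one]
  rcases chi4_pm (ordCompl_odd (n := n) hn) with h | h <;> rw [h] <;> norm_num

lemma fF_pow12 {c : ℂ} (hc : c ^ 12 = 1) {n : ℕ} (hn : n ≠ 0) :
    (fF c n) ^ 12 = 1 := by
  unfold fF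
  rw [mul_pow, ← pow_mul, mul_comm (n.factorization 2) 12, pow_mul, hc, one_pow, mul_one]
  have h := chi4_sq (ordCompl_odd (n := n) hn)
  calc ((ZMod.χ₄ ((ordCompl[2] n : ℕ) : ZMod 4) : ℤ) : ℂ) ^ 12
      = (((ZMod.χ₄ ((ordCompl[2] n : ℕ) : ZMod 4) : ℤ) : ℂ) ^ 2) ^ 6 := by ring
    _ = 1 := by rw [h, one_pow]

lemma root12_dist {u : ℂ} (hu : u ^ 12 = 1) (hne : u ≠ 1) :
    (2 / 11 : ℝ) ≤ ‖1 - u‖ := by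
  have habs : ‖u‖ = 1 := by
    have h : ‖u‖ ^ 12 = 1 := by
      rw [← norm_pow, hu, norm_one]
    rcases lt_trichotomy (‖u‖) 1 with hl | hl | hl
    · have := pow_lt_one₀ (norm_nonneg u) hl (by norm_num : (12 : ℕ) ≠ 0)
      linarith
    · exact hl
    · have := one_lt_pow₀ hl (by norm_num : (12 : ℕ) ≠ 0)
      linarith
  have hsum : ∑ j ∈ range 12, u ^ j = 0 := by
    rw [geom_sum_eq hne, hu]
    simp
  have h12 : (12 : ℝ) = ‖∑ j ∈ range 12, (1 - u ^ j)‖ := by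
    rw [Finset.sum_sub_distrib, hsum, sub_zero]
    simp
  have hterm : ∀ j ∈ range 12, ‖1 - u ^ j‖ ≤ j * ‖1 - u‖ := by
    intro j _
    have hfact : 1 - u ^ j = (1 - u) * ∑ i ∈ range j, u ^ i := by
      have h := geom_sum_mul u j
      linear_combination h
    rw [hfact, norm_mul]
    have hb : ‖∑ i ∈ range j, u ^ i‖ ≤ j := by
      calc ‖∑ i ∈ range j, u ^ i‖ ≤ ∑ i ∈ range j, ‖u ^ i‖ :=
            norm_sum_le _ _
        _ = ∑ _i ∈ range j, (1 : ℝ) := by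
            refine Finset.sum_congr rfl fun i _ => ?_
            rw [norm_pow, habs, one_pow]
        _ = j := by simp
    calc ‖1 - u‖ * ‖∑ i ∈ range j, u ^ i‖
        ≤ ‖1 - u‖ * j :=
          mul_le_mul_of_nonneg_left hb (norm_nonneg _)
      _ = j * ‖1 - u‖ := by ring
  have hle : (12 : ℝ) ≤ ∑ j ∈ range 12, (j : ℝ) * ‖1 - u‖ := by
    rw [h12]
    calc ‖∑ j ∈ range 12, (1 - u ^ j)‖
        ≤ ∑ j ∈ range 12, ‖1 - u ^ j‖ := norm_sum_le _ _
      _ ≤ ∑ j ∈ range 12, (j : ℝ) * ‖1 - u‖ := Finset.sum_le_sum hterm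
  have hsum2 : ∑ j ∈ range 12, (j : ℝ) * ‖1 - u‖ = 66 * ‖1 - u‖ := by
    rw [← Finset.sum_mul]
    norm_num [Finset.sum_range_succ]
  rw [hsum2] at hle
  linarith

lemma fac2_of_odd {n : ℕ} (h : n % 2 = 1) : n.factorization 2 = 0 :=
  Nat.factorization_eq_zero_of_not_dvd (by omega)

lemma fac2_of_two_mod_four {n : ℕ} (h : n % 4 = 2) : n.factorization 2 = 1 := by
  have hm : n = 2 * (n / 2) := by omega
  have hodd : (n / 2) % 2 = 1 := by omega
  rw [hm, Nat.factorization_mul (by norm_num) (by omega)]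
  have h1 : Nat.factorization 2 2 = 1 := Nat.Prime.factorization_self Nat.prime_two
  have h2 : (n / 2).factorization 2 = 0 := fac2_of_odd hodd
  simp [Finsupp.add_apply, h1, h2]

lemma ordCompl_of_odd {n : ℕ} (h : n % 2 = 1) : ordCompl[2] n = n := by
  rw [fac2_of_odd h]
  simp

/-- The key non-equality. -/
lemma key_ne {n : ℕ} (hn : 1 ≤ n) : fF cw (n + 2) ≠ fF Complex.I n := by
  intro heq
  unfold fF at heq
  set x : ℤ := (ZMod.χ₄ ((ordCompl[2] (n + 2) : ℕ) : ZMod 4) : ℤ) with hxdef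
  set y : ℤ := (ZMod.χ₄ ((ordCompl[2] n : ℕ) : ZMod 4) : ℤ) with hydef
  have hx2 : ((x : ℂ)) ^ 2 = 1 := chi4_sq (ordCompl_odd (show n + 2 ≠ 0 by omega))
  have hy2 : ((y : ℂ)) ^ 2 = 1 := chi4_sq (ordCompl_odd (show n ≠ 0 by omega))
  rcases Nat.even_or_odd n with he | ho
  · -- n even
    have hmod : n % 4 = 0 ∨ n % 4 = 2 := by
      rcases he with ⟨k, hk⟩
      omega
    rcases hmod with h4 | h4
    · -- n ≡ 0 mod 4, so (n+2) % 4 = 2 and (n+2).factorization 2 = 1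
      have ha' : (n + 2).factorization 2 = 1 := fac2_of_two_mod_four (by omega)
      rw [ha', pow_one] at heq
      have hx4 : ((x : ℂ)) ^ 4 = 1 := by
        calc ((x : ℂ)) ^ 4 = (((x : ℂ)) ^ 2) ^ 2 := by ring
          _ = 1 := by rw [hx2, one_pow]
      have hy4 : ((y : ℂ)) ^ 4 = 1 := by
        calc ((y : ℂ)) ^ 4 = (((y : ℂ)) ^ 2) ^ 2 := by ring
          _ = 1 := by rw [hy2, one_pow]
      have hI4 : (Complex.I ^ n.factorization 2) ^ 4 = 1 := by
        rw [← pow_mul, mul_comm, pow_mul]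
        norm_num
      have hcw4 : cw ^ 4 = 1 := by
        calc cw ^ 4 = ((x : ℂ)) ^ 4 * cw ^ 4 := by rw [hx4, one_mul]
          _ = (((x : ℂ)) * cw) ^ 4 := by rw [mul_pow]
          _ = (((y : ℂ)) * Complex.I ^ n.factorization 2) ^ 4 := by rw [heq]
          _ = ((y : ℂ)) ^ 4 * (Complex.I ^ n.factorization 2) ^ 4 := by rw [mul_pow]
          _ = 1 := by rw [hy4, hI4, one_mul]
      have hcw : cw = 1 := by
        calc cw = cw ^ 3 * cw := by rw [cw_pow_three, one_mul]
          _ = cw ^ 4 := by ring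
          _ = 1 := hcw4
      exact cw_ne_one hcw
    · -- n ≡ 2 mod 4: n.factorization 2 = 1, take 6th powers
      have ha : n.factorization 2 = 1 := fac2_of_two_mod_four h4
      rw [ha, pow_one] at heq
      have hx6 : ((x : ℂ)) ^ 6 = 1 := by
        calc ((x : ℂ)) ^ 6 = (((x : ℂ)) ^ 2) ^ 3 := by ring
          _ = 1 := by rw [hx2, one_pow]
      have hy6 : ((y : ℂ)) ^ 6 = 1 := by
        calc ((y : ℂ)) ^ 6 = (((y : ℂ)) ^ 2) ^ 3 := by ring
          _ = 1 := by rw [hy2, one_pow]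
      have hL : (((x : ℂ)) * cw ^ ((n + 2).factorization 2)) ^ 6 = 1 := by
        rw [mul_pow, hx6, one_mul, ← pow_mul,
          show (n + 2).factorization 2 * 6 = 3 * ((n + 2).factorization 2 * 2) by ring,
          pow_mul, cw_pow_three, one_pow]
      have hR : (((y : ℂ)) * Complex.I) ^ 6 = -1 := by
        rw [mul_pow, hy6, one_mul, show (6 : ℕ) = 2 * 3 from rfl, pow_mul, Complex.I_sq]
        norm_num
      rw [heq, hR] at hL
      norm_num at hL
  · -- n odd
    have hn2 : n % 2 = 1 := Nat.odd_iff.mp ho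
    have h1 : n.factorization 2 = 0 := fac2_of_odd hn2
    have h2 : (n + 2).factorization 2 = 0 := fac2_of_odd (by omega)
    rw [h1, h2] at heq
    simp only [pow_zero, mul_one] at heq
    have heqZ : x = y := by exact_mod_cast heq
    rw [hxdef, hydef, ordCompl_of_odd (show (n + 2) % 2 = 1 by omega),
      ordCompl_of_odd hn2] at heqZ
    rw [ZMod.χ₄_nat_eq_if_mod_four, ZMod.χ₄_nat_eq_if_mod_four] at heqZ
    rcases (by omega : n % 4 = 1 ∨ n % 4 = 3) with h | h
    · rw [if_neg (by omega), if_neg (by omega), if_neg (by omega), if_pos (by omega)] at heqZ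
      norm_num at heqZ
    · rw [if_neg (by omega), if_pos (by omega), if_neg (by omega), if_neg (by omega)] at heqZ
      norm_num at heqZ

theorem stmt5 :
    ∃ f g : ℕ → ℂ, IsUnitCM f ∧ IsUnitCM g ∧
      ∃ δ : ℝ, 0 < δ ∧ ∃ N : ℕ, ∀ n, N ≤ n → 1 ≤ n →
        δ ≤ ‖f (n + 2) - g n‖ := by
  refine ⟨fF cw, fF Complex.I, ⟨fF_one _, fun m n hm hn => fF_mul _ (by omega) (by omega),
    fun n hn => fF_abs cw_abs (by omega)⟩,
    ⟨fF_one _, fun m n hm hn => fF_mul _ (by omega) (by omega),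
    fun n hn => fF_abs Complex.norm_I (by omega)⟩,
    2 / 11, by norm_num, 1, fun n _ hn => ?_⟩
  set z := fF cw (n + 2) with hz
  set w := fF Complex.I n with hw
  have hz12 : z ^ 12 = 1 := fF_pow12 (by
    rw [show (12 : ℕ) = 3 * 4 from rfl, pow_mul, cw_pow_three, one_pow]) (by omega)
  have hw12 : w ^ 12 = 1 := fF_pow12 (by
    rw [show (12 : ℕ) = 4 * 3 from rfl, pow_mul, Complex.I_pow_four, one_pow]) (by omega)
  have hwne : w ≠ 0 := by
    intro h
    rw [h] at hw12
    norm_num at hw12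
  have hne : z ≠ w := key_ne hn
  have hu12 : (z / w) ^ 12 = 1 := by
    rw [div_pow, hz12, hw12, div_one]
  have hune : z / w ≠ 1 := by
    intro h
    rw [div_eq_one_iff_eq hwne] at h
    exact hne h
  have habsw : ‖w‖ = 1 := fF_abs Complex.norm_I (by omega)
  have : ‖z - w‖ = ‖1 - z / w‖ := by
    rw [show z - w = w * (z / w - 1) by field_simp, norm_mul, habsw, one_mul,
      ← norm_neg]
    ring_nf
  rw [this]
  exact root12_dist hu12 hune
end

section
/- Let a ∈ ℕ (a ≥ 1) and b, d ∈ ℤ with gcd(a,b,d) = 1, and suppose that b = d or a ∣ b·d. Let (X, 𝒳, μ, (T_n)_{n∈ℕ}) be a finitely generated multiplicative measure-preserving system. Then for every A ∈ 𝒳 with μ(A) > 0 there exist infinitely many n ∈ ℕ with an+b > 0, an+d > 0 and μ(T_{an+b}^{-1}A ∩ T_{an+d}^{-1}A) > 0. -/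
open MeasureTheory


namespace Stmt6NT

/-- Split `a` into a part dividing a power of `m` and a part coprime to `m`. -/
lemma split_lemma (m : ℕ) : ∀ a : ℕ, 1 ≤ a → ∃ s t : ℕ, a = s * t ∧ Nat.Coprime t m ∧ s ∣ m ^ a := by
  intro a
  induction a using Nat.strong_induction_on with
  | _ a ih =>
    intro ha
    by_cases hg : Nat.gcd a m = 1
    · exact ⟨1, a, by ring, hg, one_dvd _⟩
    · set g := Nat.gcd a m with hgdef
      have hga : g ∣ a := Nat.gcd_dvd_left a m
      have hgm : g ∣ m := Nat.gcd_dvd_right a m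
      have hg0 : g ≠ 0 := by
        intro h0
        rw [h0] at hga
        have := Nat.eq_zero_of_zero_dvd hga
        omega
      have hg2 : 2 ≤ g := by
        rcases Nat.lt_or_ge g 2 with h | h
        · interval_cases g <;> simp_all
        · exact h
      obtain ⟨a', ha'⟩ := hga
      have ha'pos : 1 ≤ a' := by
        rcases Nat.eq_zero_or_pos a' with h | h
        · subst h; simp at ha'; omega
        · exact h
      have ha'lt : a' < a := by
        nlinarith
      obtain ⟨s', t', h1, h2, h3⟩ := ih a' ha'lt ha'pos
      refine ⟨g * s', t', by rw [ha', h1]; ring, h2, ?_⟩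
      have : g * s' ∣ m * m ^ a' := mul_dvd_mul hgm h3
      calc g * s' ∣ m ^ (a' + 1) := by rw [pow_succ, mul_comm (m^a')]; exact this
        _ ∣ m ^ a := pow_dvd_pow m (by omega)

lemma gcd_split (a : ℕ) (ha : 1 ≤ a) (b d : ℤ)
    (hgcd : Int.gcd (Int.gcd (a : ℤ) b : ℤ) d = 1)
    (habd : (a : ℤ) ∣ b * d) :
    ∃ ab ad : ℕ, ab * ad = a ∧ Nat.Coprime ab ad ∧ ((ab : ℤ) ∣ b) ∧ ((ad : ℤ) ∣ d) := by
  obtain ⟨s, t, h1, h2, h3⟩ := split_lemma d.natAbs a ha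
  refine ⟨t, s, by rw [h1, Nat.mul_comm], ?_, ?_, ?_⟩
  · -- Coprime t s
    exact Nat.Coprime.coprime_dvd_right h3 (Nat.Coprime.pow_right a h2)
  · -- (t:ℤ) ∣ b
    have htd : IsCoprime (t : ℤ) d := by
      rw [Int.isCoprime_iff_gcd_eq_one]
      simpa [Int.gcd] using h2
    have htbd : (t : ℤ) ∣ b * d := by
      refine dvd_trans ?_ habd
      exact_mod_cast (⟨s, by rw [h1]; ring⟩ : t ∣ a)
    exact htd.dvd_of_dvd_mul_right htbd
  · -- (s:ℤ) ∣ d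
    have hγ : Nat.Coprime s b.natAbs := by
      set γ := Nat.gcd s b.natAbs with hγdef
      have hδ : Nat.gcd γ d.natAbs = 1 := by
        have h5 : Nat.gcd γ d.natAbs ∣ Nat.gcd (Nat.gcd a b.natAbs) d.natAbs := by
          apply Nat.dvd_gcd
          · apply Nat.dvd_gcd
            · exact dvd_trans (Nat.gcd_dvd_left γ d.natAbs) (dvd_trans (Nat.gcd_dvd_left s b.natAbs) ⟨t, h1⟩)
            · exact dvd_trans (Nat.gcd_dvd_left γ d.natAbs) (Nat.gcd_dvd_right s b.natAbs)
          · exact Nat.gcd_dvd_right _ _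
        have h6 : Nat.gcd (Nat.gcd a b.natAbs) d.natAbs = 1 := by
          simpa [Int.gcd] using hgcd
        rw [h6] at h5
        exact Nat.dvd_one.mp h5
      have hcop : Nat.Coprime γ d.natAbs := hδ
      have hdvd : γ ∣ d.natAbs ^ a := dvd_trans (Nat.gcd_dvd_left _ _) h3
      exact Nat.Coprime.eq_one_of_dvd (Nat.Coprime.pow_right a hcop) hdvd
    have hsb : IsCoprime (s : ℤ) b := by
      rw [Int.isCoprime_iff_gcd_eq_one]
      simpa [Int.gcd] using hγ
    have hsbd : (s : ℤ) ∣ b * d := by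
      refine dvd_trans ?_ habd
      exact_mod_cast (⟨t, h1⟩ : s ∣ a)
    exact hsb.dvd_of_dvd_mul_left hsbd


def pairsF (K m : ℕ) : Finset (ℕ × ℕ) :=
  (Finset.Ico m K ×ˢ Finset.Iic K).filter (fun q => q.1 < q.2)

lemma mem_pairsF {K m i j : ℕ} : (i, j) ∈ pairsF K m ↔ (m ≤ i ∧ i < j ∧ j ≤ K) := by
  simp only [pairsF, Finset.mem_filter, Finset.mem_product, Finset.mem_Ico, Finset.mem_Iic]
  omega

def Efun (ab ad : ℕ) (t : ℕ → ℕ) (i j : ℕ) : ℕ :=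
  ∑ l ∈ Finset.Ico (i + 1) (j + 1), ab ^ (j - l) * ad ^ (l - 1 - i) * t l

def tf (ab ad K : ℕ) (m : ℕ) : ℕ :=
  if _h : K ≤ m then 1
  else ∏ q ∈ (pairsF K m).attach,
    ∑ l ∈ (Finset.Ico (q.1.1 + 1) (q.1.2 + 1)).attach,
      ab ^ (q.1.2 - l.1) * ad ^ (l.1 - 1 - q.1.1) * tf ab ad K l.1
termination_by K - m
decreasing_by
  · have hq := q.2
    have hl := l.2
    simp only [pairsF, Finset.mem_filter, Finset.mem_product, Finset.mem_Ico, Finset.mem_Iic] at hq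
    simp only [Finset.mem_Ico] at hl
    omega

lemma tf_eq (ab ad K m : ℕ) (h : m < K) :
    tf ab ad K m = ∏ q ∈ pairsF K m, Efun ab ad (tf ab ad K) q.1 q.2 := by
  rw [tf, dif_neg (by omega)]
  rw [← Finset.prod_attach (pairsF K m) (fun q => Efun ab ad (tf ab ad K) q.1 q.2)]
  apply Finset.prod_congr rfl
  intro q _
  rw [Efun, ← Finset.sum_attach (Finset.Ico (q.1.1 + 1) (q.1.2 + 1))]

lemma tf_eq_one (ab ad K m : ℕ) (h : K ≤ m) : tf ab ad K m = 1 := by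
  rw [tf, dif_pos h]

section Facts

variable {ab ad K : ℕ}

lemma Efun_decomp_top {t : ℕ → ℕ} {i j : ℕ} (hij : i < j) :
    Efun ab ad t i j
      = (∑ l ∈ Finset.Ico (i + 1) j, ab ^ (j - l) * ad ^ (l - 1 - i) * t l)
        + ad ^ (j - 1 - i) * t j := by
  rw [Efun, Finset.sum_Ico_succ_top (by omega : i + 1 ≤ j)]
  congr 1
  have : j - j = 0 := by omega
  rw [this, pow_zero, one_mul]

lemma Efun_decomp_bot {t : ℕ → ℕ} {i j : ℕ} (hij : i < j) :
    Efun ab ad t i j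
      = ab ^ (j - i - 1) * t (i + 1)
        + ∑ l ∈ Finset.Ico (i + 2) (j + 1), ab ^ (j - l) * ad ^ (l - 1 - i) * t l := by
  rw [Efun, Finset.sum_eq_sum_Ico_succ_bot (by omega : i + 1 < j + 1)]
  congr 1
  have h1 : i + 1 - 1 - i = 0 := by omega
  have h2 : j - (i + 1) = j - i - 1 := by omega
  rw [h1, h2, pow_zero, mul_one]

lemma Efun_pos (hab : 1 ≤ ab) (had : 1 ≤ ad) {t : ℕ → ℕ} {i j : ℕ} (hij : i < j)
    (ht : 1 ≤ t j) : 1 ≤ Efun ab ad t i j := by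
  rw [Efun_decomp_top hij]
  have : 1 ≤ ad ^ (j - 1 - i) * t j :=
    Nat.one_le_iff_ne_zero.mpr (Nat.mul_ne_zero (by positivity) (by omega))
  omega

lemma Efun_cop_ab (hcop : Nat.Coprime ab ad) {t : ℕ → ℕ} {i j : ℕ} (hij : i < j)
    (ht : Nat.Coprime (t j) ab) : Nat.Coprime (Efun ab ad t i j) ab := by
  rw [Efun_decomp_top hij]
  obtain ⟨k, hk⟩ : ab ∣ ∑ l ∈ Finset.Ico (i + 1) j, ab ^ (j - l) * ad ^ (l - 1 - i) * t l := by
    apply Finset.dvd_sum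
    intro l hl
    simp only [Finset.mem_Ico] at hl
    exact dvd_mul_of_dvd_left
      (dvd_mul_of_dvd_left (dvd_pow_self ab (by omega : j - l ≠ 0)) _) _
  rw [hk, add_comm]
  exact (Nat.coprime_add_mul_left_left _ _ _).mpr (Nat.Coprime.mul (hcop.symm.pow_left _) ht)

lemma Efun_cop_ad (hcop : Nat.Coprime ab ad) {t : ℕ → ℕ} {i j : ℕ} (hij : i < j)
    (ht : Nat.Coprime (t (i + 1)) ad) : Nat.Coprime (Efun ab ad t i j) ad := by
  rw [Efun_decomp_bot hij]
  obtain ⟨k, hk⟩ : ad ∣ ∑ l ∈ Finset.Ico (i + 2) (j + 1), ab ^ (j - l) * ad ^ (l - 1 - i) * t l := by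
    apply Finset.dvd_sum
    intro l hl
    simp only [Finset.mem_Ico] at hl
    exact dvd_mul_of_dvd_left
      (dvd_mul_of_dvd_right (dvd_pow_self ad (by omega : l - 1 - i ≠ 0)) _) _
  rw [hk]
  exact (Nat.coprime_add_mul_left_left _ _ _).mpr (Nat.Coprime.mul (hcop.pow_left _) ht)

lemma tf_pos (hab : 1 ≤ ab) (had : 1 ≤ ad) :
    ∀ n m : ℕ, K - m ≤ n → 1 ≤ tf ab ad K m := by
  intro n
  induction n with
  | zero => intro m hm; rw [tf_eq_one ab ad K m (by omega)]
  | succ n ih =>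
    intro m hm
    by_cases h : K ≤ m
    · rw [tf_eq_one ab ad K m h]
    · rw [tf_eq ab ad K m (by omega)]
      apply Finset.one_le_prod'
      intro q hq
      have hq' : m ≤ q.1 ∧ q.1 < q.2 ∧ q.2 ≤ K := by
        have : (q.1, q.2) ∈ pairsF K m := by simpa using hq
        exact mem_pairsF.mp this
      exact Efun_pos hab had hq'.2.1 (ih q.2 (by omega))

lemma tf_pos' (hab : 1 ≤ ab) (had : 1 ≤ ad) (m : ℕ) : 1 ≤ tf ab ad K m :=
  tf_pos hab had (K - m) m le_rfl

lemma tf_cop (hab : 1 ≤ ab) (had : 1 ≤ ad) (hcop : Nat.Coprime ab ad) :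
    ∀ n m : ℕ, K - m ≤ n →
      Nat.Coprime (tf ab ad K m) ab ∧ Nat.Coprime (tf ab ad K m) ad := by
  intro n
  induction n with
  | zero =>
    intro m hm
    rw [tf_eq_one ab ad K m (by omega)]
    exact ⟨Nat.coprime_one_left _, Nat.coprime_one_left _⟩
  | succ n ih =>
    intro m hm
    by_cases h : K ≤ m
    · rw [tf_eq_one ab ad K m h]
      exact ⟨Nat.coprime_one_left _, Nat.coprime_one_left _⟩
    · rw [tf_eq ab ad K m (by omega)]
      constructor
      · apply Nat.Coprime.prod_left
        intro q hq
        have hq' : m ≤ q.1 ∧ q.1 < q.2 ∧ q.2 ≤ K := by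
          have : (q.1, q.2) ∈ pairsF K m := by simpa using hq
          exact mem_pairsF.mp this
        exact Efun_cop_ab hcop hq'.2.1 (ih q.2 (by omega)).1
      · apply Nat.Coprime.prod_left
        intro q hq
        have hq' : m ≤ q.1 ∧ q.1 < q.2 ∧ q.2 ≤ K := by
          have : (q.1, q.2) ∈ pairsF K m := by simpa using hq
          exact mem_pairsF.mp this
        exact Efun_cop_ad hcop hq'.2.1 (ih (q.1 + 1) (by omega)).2

lemma tf_cop' (hab : 1 ≤ ab) (had : 1 ≤ ad) (hcop : Nat.Coprime ab ad) (m : ℕ) :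
    Nat.Coprime (tf ab ad K m) ab ∧ Nat.Coprime (tf ab ad K m) ad :=
  tf_cop hab had hcop (K - m) m le_rfl

end Facts

section Main

variable (ab ad K : ℕ)

def EE (i j : ℕ) : ℕ := Efun ab ad (tf ab ad K) i j

def hh (l : ℕ) : ℕ := ab ^ (K - l) * ad ^ (l - 1) * tf ab ad K l

def SS (i j : ℕ) : ℕ := ∑ l ∈ Finset.Ico (i + 1) (j + 1), hh ab ad K l

variable {ab ad K}

lemma EE_pos (hab : 1 ≤ ab) (had : 1 ≤ ad) (i j : ℕ) (hij : i < j) : 1 ≤ EE ab ad K i j :=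
  Efun_pos hab had hij (tf_pos' hab had j)

lemma EE_cop_ab (hab : 1 ≤ ab) (had : 1 ≤ ad) (hcop : Nat.Coprime ab ad)
    (i j : ℕ) (hij : i < j) : Nat.Coprime (EE ab ad K i j) ab :=
  Efun_cop_ab hcop hij (tf_cop' hab had hcop j).1

lemma EE_cop_ad (hab : 1 ≤ ab) (had : 1 ≤ ad) (hcop : Nat.Coprime ab ad)
    (i j : ℕ) (hij : i < j) : Nat.Coprime (EE ab ad K i j) ad :=
  Efun_cop_ad hcop hij (tf_cop' hab had hcop (i + 1)).2

lemma EE_dvd_tf {m i j : ℕ} (hm : m < K) (hmi : m ≤ i) (hij : i < j) (hj : j ≤ K) :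
    EE ab ad K i j ∣ tf ab ad K m := by
  rw [tf_eq ab ad K m hm]
  have h := Finset.dvd_prod_of_mem (f := fun q : ℕ × ℕ => Efun ab ad (tf ab ad K) q.1 q.2)
    (mem_pairsF.mpr ⟨hmi, hij, hj⟩)
  exact h

set_option maxHeartbeats 1000000 in
lemma SS_fact {i j : ℕ} (hij : i < j) (hj : j ≤ K) :
    SS ab ad K i j = ab ^ (K - j) * ad ^ i * EE ab ad K i j := by
  rw [SS, EE, Efun, Finset.mul_sum]
  apply Finset.sum_congr rfl
  intro l hl
  simp only [Finset.mem_Ico] at hl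
  have e1 : K - l = (K - j) + (j - l) := by omega
  have e2 : l - 1 = i + (l - 1 - i) := by omega
  have e3 : ab ^ (K - j) * ad ^ i * (ab ^ (j - l) * ad ^ (l - 1 - i) * tf ab ad K l)
      = ab ^ ((K - j) + (j - l)) * ad ^ (i + (l - 1 - i)) * tf ab ad K l := by
    rw [pow_add, pow_add]; ring
  rw [hh, e3, ← e1, ← e2]

lemma SS_add {i j k : ℕ} (hij : i ≤ j) (hjk : j ≤ k) :
    SS ab ad K i j + SS ab ad K j k = SS ab ad K i k := by
  rw [SS, SS, SS]
  exact Finset.sum_Ico_consecutive _ (by omega) (by omega)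

lemma hh_pos (hab : 1 ≤ ab) (had : 1 ≤ ad) (l : ℕ) : 1 ≤ hh ab ad K l := by
  rw [hh]
  have h0 := tf_pos' (K := K) hab had l
  have h1 : 1 ≤ ab ^ (K - l) := Nat.one_le_pow _ _ (by omega)
  have h2 : 1 ≤ ad ^ (l - 1) := Nat.one_le_pow _ _ (by omega)
  exact Nat.one_le_iff_ne_zero.mpr (by positivity)

lemma SS_pos (hab : 1 ≤ ab) (had : 1 ≤ ad) {i j : ℕ} (hij : i < j) : 1 ≤ SS ab ad K i j := by
  rw [SS]
  calc 1 ≤ hh ab ad K (i + 1) := hh_pos hab had _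
    _ ≤ _ := Finset.single_le_sum (fun l _ => Nat.zero_le _)
          (by simp only [Finset.mem_Ico]; omega)

lemma SS_le {i j : ℕ} (hj : j ≤ K) : SS ab ad K i j ≤ SS ab ad K 0 K := by
  rw [SS, SS]
  apply Finset.sum_le_sum_of_subset
  intro l hl
  simp only [Finset.mem_Ico] at *
  omega

end Main

section Construction

lemma construction (ab ad c K N₀ : ℕ) (b d : ℤ) (hab : 1 ≤ ab) (had : 1 ≤ ad)
    (hcop : Nat.Coprime ab ad) (hK : 1 ≤ K) (hc : 1 ≤ c)
    (habb : (ab : ℤ) ∣ b) (hadd : (ad : ℤ) ∣ d) (hbdc : d = b + (c : ℤ)) :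
    ∃ v : ℕ → ℕ, ∀ i j : ℕ, i < j → j ≤ K →
      1 ≤ v i ∧ ∃ B S : ℕ, v j = v i + S ∧ 1 ≤ S ∧ N₀ + 1 ≤ B ∧
        B * S = c * v i ∧ ((ab * ad : ℕ) : ℤ) ∣ (B : ℤ) - b := by
  classical
  set t0 : ℕ := tf ab ad K 0 with ht0
  set Q : ℕ := ab ^ K * t0 with hQ
  set G : ℕ := SS ab ad K 0 K with hG
  have ht0pos : 1 ≤ t0 := tf_pos' hab had 0
  have hQpos : 1 ≤ Q := by
    have : 1 ≤ ab ^ K := Nat.one_le_pow _ _ (by omega)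
    exact Nat.one_le_iff_ne_zero.mpr (by positivity)
  have hGpos : 1 ≤ G := SS_pos hab had (by omega)
  have hcopQ : Nat.Coprime (ad ^ K) Q := by
    apply Nat.Coprime.mul_right
    · exact Nat.Coprime.pow _ _ hcop.symm
    · exact Nat.Coprime.pow_left _ (tf_cop' hab had hcop 0).2.symm
  have hicop : IsCoprime ((ad ^ K : ℕ) : ℤ) ((Q : ℕ) : ℤ) := by
    rw [Int.isCoprime_iff_gcd_eq_one, Int.gcd_natCast_natCast]
    exact hcopQ
  obtain ⟨u, w, huw⟩ := hicop
  set bound : ℕ := (N₀ + 2) * (G + 1) with hbound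
  set Tz : ℤ := (bound : ℤ) + |u * (G : ℤ)| with hTz
  set Mz : ℤ := u * (G : ℤ) + Tz * (Q : ℤ) with hMz
  have hTznn : 0 ≤ Tz := by positivity
  have hMz_ge : (bound : ℤ) ≤ Mz := by
    have h1 : Tz ≤ Tz * (Q : ℤ) := le_mul_of_one_le_right hTznn (by exact_mod_cast hQpos)
    have h2 : -|u * (G : ℤ)| ≤ u * (G : ℤ) := neg_abs_le _
    rw [hMz, hTz]
    nlinarith [abs_nonneg (u * (G : ℤ))]
  have hMz_div : ((Q : ℕ) : ℤ) ∣ ((ad : ℤ) ^ K * Mz - (G : ℤ)) := by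
    refine ⟨(G : ℤ) * (-w) + (ad : ℤ) ^ K * Tz, ?_⟩
    have hcast : ((ad ^ K : ℕ) : ℤ) = (ad : ℤ) ^ K := by push_cast; ring
    rw [hcast] at huw
    rw [hMz]
    linear_combination (G : ℤ) * huw
  set M : ℕ := Mz.toNat with hM
  have hMcast : (M : ℤ) = Mz := Int.toNat_of_nonneg (le_trans (by positivity) hMz_ge)
  have hMb : bound ≤ M := by exact_mod_cast hMcast ▸ hMz_ge
  have hboundG : G + 1 ≤ bound := by
    have h9 : 1 * (G + 1) ≤ (N₀ + 2) * (G + 1) := Nat.mul_le_mul_right _ (by omega)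
    omega
  have hle : G ≤ ad ^ K * M := by
    have h1 : M ≤ ad ^ K * M := Nat.le_mul_of_pos_left M (by positivity)
    omega
  set W : ℕ := ad ^ K * M - G with hW
  have hWcast : (W : ℤ) = (ad : ℤ) ^ K * (M : ℤ) - (G : ℤ) := by
    rw [hW]
    push_cast [Nat.cast_sub hle]
    ring
  have hQW : Q ∣ W := by
    have : ((Q : ℕ) : ℤ) ∣ ((W : ℕ) : ℤ) := by
      rw [hWcast, hMcast]
      exact hMz_div
    exact_mod_cast this
  have habKW : ab ^ K ∣ W := dvd_trans (Dvd.intro t0 rfl) hQW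
  have htfW : t0 ∣ W := dvd_trans (Dvd.intro_left (ab ^ K) rfl) hQW
  have hWge : N₀ * G + N₀ + G + 2 ≤ W := by
    have h1 : M ≤ ad ^ K * M := Nat.le_mul_of_pos_left M (by positivity)
    have hexp : bound = N₀ * G + N₀ + 2 * G + 2 := by rw [hbound]; ring
    omega
  set g : ℕ → ℕ := fun i => SS ab ad K 0 i with hgdef
  have hg0 : g 0 = 0 := by
    simp [hgdef, SS]
  set v : ℕ → ℕ := fun i => W + g i with hv
  have hvK : v K + 0 = ad ^ K * M := by
    have : g K = G := rfl
    simp only [hv, this]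
    omega
  -- key divisibility facts
  have hv_ab : ∀ k, k ≤ K → ab ^ (K - k) ∣ v k := by
    intro k hk
    rcases Nat.eq_zero_or_pos k with rfl | hkpos
    · simp only [hv, hg0, add_zero]
      exact dvd_trans (pow_dvd_pow ab (by omega)) habKW
    · have hgfact : g k = ab ^ (K - k) * ad ^ 0 * EE ab ad K 0 k := SS_fact hkpos hk
      apply dvd_add
      · exact dvd_trans (pow_dvd_pow ab (by omega)) habKW
      · rw [hgfact]
        exact ⟨ad ^ 0 * EE ab ad K 0 k, by ring⟩
  have hv_ad : ∀ k, k ≤ K → ad ^ k ∣ v k := by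
    intro k hk
    rcases Nat.eq_or_lt_of_le hk with rfl | hklt
    · have : v k = ad ^ k * M := by omega
      rw [this]
      exact Dvd.intro M rfl
    · have hsum : v k + SS ab ad K k K = ad ^ K * M := by
        have h1 : g k + SS ab ad K k K = G := SS_add (Nat.zero_le k) hk
        simp only [hv]
        omega
      have h1 : ad ^ k ∣ ad ^ K * M := dvd_mul_of_dvd_left (pow_dvd_pow ad hk) M
      have h2 : ad ^ k ∣ SS ab ad K k K := by
        rw [SS_fact hklt le_rfl]
        exact ⟨ab ^ (K - K) * EE ab ad K k K, by ring⟩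
      have : v k = ad ^ K * M - SS ab ad K k K := by omega
      rw [this]
      exact Nat.dvd_sub h1 h2
  have hE_v : ∀ i j k, i < j → j ≤ K → k ≤ i → EE ab ad K i j ∣ v k := by
    intro i j k hij hj hk
    apply dvd_add
    · exact dvd_trans (EE_dvd_tf (by omega) (Nat.zero_le i) hij hj) htfW
    · rcases Nat.eq_zero_or_pos k with rfl | hkpos
      · rw [hg0]
        exact dvd_zero _
      · apply Finset.dvd_sum
        intro l hl
        simp only [Finset.mem_Ico] at hl
        have : EE ab ad K i j ∣ tf ab ad K l := EE_dvd_tf (by omega) (by omega) hij hj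
        exact Dvd.dvd.mul_left this _
  refine ⟨v, ?_⟩
  intro i j hij hjK
  have hiK : i < K := by omega
  have hWv : W ≤ v i := Nat.le_add_right _ _
  have hvipos : 1 ≤ v i := by omega
  refine ⟨hvipos, ?_⟩
  set S : ℕ := SS ab ad K i j with hS
  have hvj : v j = v i + S := by
    have h1 : g i + S = g j := SS_add (Nat.zero_le i) (le_of_lt hij)
    simp only [hv]
    omega
  have hSpos : 1 ≤ S := SS_pos hab had hij
  have hSfact : S = ab ^ (K - j) * ad ^ i * EE ab ad K i j := SS_fact hij hjK
  have hSleG : S ≤ G := SS_le hjK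
  have hEvi : EE ab ad K i j ∣ v i := hE_v i j i hij hjK le_rfl
  have hEvj : EE ab ad K i j ∣ v j := by
    rw [hvj]
    refine dvd_add hEvi ?_
    rw [hSfact]
    exact ⟨ab ^ (K - j) * ad ^ i, by ring⟩
  have hSvi : S ∣ v i := by
    rw [hSfact]
    apply Nat.Coprime.mul_dvd_of_dvd_of_dvd
    · apply Nat.Coprime.mul
      · exact Nat.Coprime.pow_left _ (EE_cop_ab hab had hcop i j hij).symm
      · exact Nat.Coprime.pow_left _ (EE_cop_ad hab had hcop i j hij).symm
    · apply Nat.Coprime.mul_dvd_of_dvd_of_dvd (Nat.Coprime.pow _ _ hcop)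
      · exact dvd_trans (pow_dvd_pow ab (by omega)) (hv_ab i (by omega))
      · exact hv_ad i (by omega)
    · exact hEvi
  have hScvi : S ∣ c * v i := Dvd.dvd.mul_left hSvi c
  set B : ℕ := c * v i / S with hB
  have hBS : B * S = c * v i := Nat.div_mul_cancel hScvi
  have hBge : N₀ + 1 ≤ B := by
    by_contra hcon
    push_neg at hcon
    have h1 : B * S ≤ N₀ * S := Nat.mul_le_mul_right S (by omega)
    have h2 : N₀ * S ≤ N₀ * G := Nat.mul_le_mul_left N₀ hSleG
    have h3 : v i ≤ c * v i := Nat.le_mul_of_pos_left _ (by omega)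
    omega
  -- the integer congruence
  have hvi_ab' : ((ab : ℤ)) ^ (K - j + 1) ∣ (d * (v i : ℤ)) := by
    apply dvd_mul_of_dvd_right
    have h1 : (ab : ℕ) ^ (K - i) ∣ v i := hv_ab i (by omega)
    have h2 : ((ab : ℤ)) ^ (K - i) ∣ (v i : ℤ) := by exact_mod_cast h1
    exact dvd_trans (pow_dvd_pow _ (by omega)) h2
  have hvj_ab' : ((ab : ℤ)) ^ (K - j + 1) ∣ (b * (v j : ℤ)) := by
    have h1 : ((ab : ℤ)) ^ (K - j) ∣ (v j : ℤ) := by exact_mod_cast hv_ab j hjK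
    have h2 : (ab : ℤ) * (ab : ℤ) ^ (K - j) ∣ b * (v j : ℤ) := mul_dvd_mul habb h1
    have h3 : ((ab : ℤ)) ^ (K - j + 1) = (ab : ℤ) * (ab : ℤ) ^ (K - j) := by ring
    rw [h3]
    exact h2
  have hvi_ad' : ((ad : ℤ)) ^ (i + 1) ∣ (d * (v i : ℤ)) := by
    have h1 : ((ad : ℤ)) ^ i ∣ (v i : ℤ) := by exact_mod_cast hv_ad i (by omega)
    have h2 : (ad : ℤ) * (ad : ℤ) ^ i ∣ d * (v i : ℤ) := mul_dvd_mul hadd h1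
    have h3 : ((ad : ℤ)) ^ (i + 1) = (ad : ℤ) * (ad : ℤ) ^ i := by ring
    rw [h3]
    exact h2
  have hvj_ad' : ((ad : ℤ)) ^ (i + 1) ∣ (b * (v j : ℤ)) := by
    apply dvd_mul_of_dvd_right
    have h1 : ((ad : ℤ)) ^ j ∣ (v j : ℤ) := by exact_mod_cast hv_ad j hjK
    exact dvd_trans (pow_dvd_pow _ (by omega)) h1
  have hE' : ((EE ab ad K i j : ℕ) : ℤ) ∣ (d * (v i : ℤ) - b * (v j : ℤ)) := by
    apply dvd_sub
    · exact dvd_mul_of_dvd_right (by exact_mod_cast hEvi) d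
    · exact dvd_mul_of_dvd_right (by exact_mod_cast hEvj) b
  have hcop12 : IsCoprime ((ab : ℤ) ^ (K - j + 1)) ((ad : ℤ) ^ (i + 1)) := by
    rw [show ((ab : ℤ)) ^ (K - j + 1) = ((ab ^ (K - j + 1) : ℕ) : ℤ) by push_cast; ring,
        show ((ad : ℤ)) ^ (i + 1) = ((ad ^ (i + 1) : ℕ) : ℤ) by push_cast; ring,
        Int.isCoprime_iff_gcd_eq_one, Int.gcd_natCast_natCast]
    exact Nat.Coprime.pow _ _ hcop
  have hcop13 : IsCoprime ((ab : ℤ) ^ (K - j + 1)) ((EE ab ad K i j : ℕ) : ℤ) := by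
    rw [show ((ab : ℤ)) ^ (K - j + 1) = ((ab ^ (K - j + 1) : ℕ) : ℤ) by push_cast; ring,
        Int.isCoprime_iff_gcd_eq_one, Int.gcd_natCast_natCast]
    exact Nat.Coprime.pow_left _ (EE_cop_ab hab had hcop i j hij).symm
  have hcop23 : IsCoprime ((ad : ℤ) ^ (i + 1)) ((EE ab ad K i j : ℕ) : ℤ) := by
    rw [show ((ad : ℤ)) ^ (i + 1) = ((ad ^ (i + 1) : ℕ) : ℤ) by push_cast; ring,
        Int.isCoprime_iff_gcd_eq_one, Int.gcd_natCast_natCast]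
    exact Nat.Coprime.pow_left _ (EE_cop_ad hab had hcop i j hij).symm
  have hbig : ((ab : ℤ) ^ (K - j + 1) * (ad : ℤ) ^ (i + 1) * ((EE ab ad K i j : ℕ) : ℤ))
      ∣ (d * (v i : ℤ) - b * (v j : ℤ)) := by
    apply IsCoprime.mul_dvd
    · exact IsCoprime.mul_left hcop13 hcop23
    · apply IsCoprime.mul_dvd hcop12
      · exact dvd_sub hvi_ab' hvj_ab'
      · exact dvd_sub hvi_ad' hvj_ad'
    · exact hE'
  have hfactored : ((ab * ad : ℕ) : ℤ) * (S : ℤ)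
      = (ab : ℤ) ^ (K - j + 1) * (ad : ℤ) ^ (i + 1) * ((EE ab ad K i j : ℕ) : ℤ) := by
    rw [hSfact]
    push_cast
    ring
  have hBSz : (B : ℤ) * (S : ℤ) = (c : ℤ) * (v i : ℤ) := by exact_mod_cast hBS
  have hvjz : ((v j : ℕ) : ℤ) = (v i : ℤ) + (S : ℤ) := by exact_mod_cast hvj
  have hkey : d * (v i : ℤ) - b * (v j : ℤ) = ((B : ℤ) - b) * (S : ℤ) := by
    rw [hbdc, hvjz]
    linear_combination -1 * hBSz
  have hdvd2 : ((ab * ad : ℕ) : ℤ) * (S : ℤ) ∣ ((B : ℤ) - b) * (S : ℤ) := by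
    rw [← hkey, hfactored]
    exact hbig
  have hSne : ((S : ℕ) : ℤ) ≠ 0 := by exact_mod_cast Nat.one_le_iff_ne_zero.mp hSpos
  have hfin : ((ab * ad : ℕ) : ℤ) ∣ ((B : ℤ) - b) :=
    (mul_dvd_mul_iff_right hSne).mp hdvd2
  exact ⟨B, S, hvj, hSpos, hBge, hBS, hfin⟩

end Construction

end Stmt6NT


namespace Stmt6M

variable {X : Type*} [MeasurableSpace X] (μ : Measure X)

lemma union_eq_sum [IsProbabilityMeasure μ] :
    ∀ (n : ℕ) (S : ℕ → Set X), (∀ i, MeasurableSet (S i)) →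
      (∀ i j, i < n → j < n → i ≠ j → μ (S i ∩ S j) = 0) →
      μ (⋃ i ∈ Finset.range n, S i) = ∑ i ∈ Finset.range n, μ (S i) := by
  intro n
  induction n with
  | zero => intro S _ _; simp
  | succ n ih =>
    intro S hmeas hnull
    rw [Finset.sum_range_succ]
    have hB : MeasurableSet (⋃ i ∈ Finset.range n, S i) :=
      MeasurableSet.biUnion (Finset.range n).countable_toSet (fun i _ => hmeas i)
    have hU : (⋃ i ∈ Finset.range (n + 1), S i)
        = (⋃ i ∈ Finset.range n, S i) ∪ S n := by
      rw [Finset.range_add_one]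
      simp [Set.biUnion_insert, Set.union_comm]
    have hI : μ ((⋃ i ∈ Finset.range n, S i) ∩ S n) = 0 := by
      have h1 : (⋃ i ∈ Finset.range n, S i) ∩ S n = ⋃ i ∈ Finset.range n, (S i ∩ S n) := by
        rw [Set.iUnion₂_inter]
      rw [h1]
      have h2 : μ (⋃ i ∈ Finset.range n, (S i ∩ S n)) ≤ ∑ i ∈ Finset.range n, μ (S i ∩ S n) :=
        measure_biUnion_finset_le _ _
      have h3 : ∑ i ∈ Finset.range n, μ (S i ∩ S n) = 0 := by
        apply Finset.sum_eq_zero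
        intro i hi
        simp only [Finset.mem_range] at hi
        exact hnull i n (by omega) (by omega) (by omega)
      simp only [h3] at h2
      exact le_antisymm h2 zero_le
    have hadd := measure_union_add_inter (μ := μ) (⋃ i ∈ Finset.range n, S i) (hmeas n)
    rw [hU, ← ih S hmeas (fun i j hi hj hij => hnull i j (by omega) (by omega) hij)]
    rw [hI, add_zero] at hadd
    exact hadd
  
lemma exists_pair [IsProbabilityMeasure μ] (n : ℕ) (S : ℕ → Set X)
    (hmeas : ∀ i, MeasurableSet (S i))
    (hsum : 1 < ∑ i ∈ Finset.range n, μ (S i)) :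
    ∃ i j, i < j ∧ j < n ∧ 0 < μ (S i ∩ S j) := by
  by_contra hcon
  push_neg at hcon
  have hnull : ∀ i j, i < n → j < n → i ≠ j → μ (S i ∩ S j) = 0 := by
    intro i j hi hj hij
    rcases Nat.lt_or_ge i j with h | h
    · have := hcon i j h hj
      exact le_antisymm this zero_le
    · have hji : j < i := by omega
      have := hcon j i hji hi
      rw [Set.inter_comm]
      exact le_antisymm this zero_le
  have := union_eq_sum μ n S hmeas hnull
  have hle : μ (⋃ i ∈ Finset.range n, S i) ≤ 1 := prob_le_one
  rw [this] at hle
  exact absurd hsum (not_lt.mpr hle)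

variable {T : ℕ → X → X} {A : Set X}

lemma scale_invariance
    (hmp : ∀ n : ℕ, 1 ≤ n → MeasurePreserving (T n) μ μ)
    (hmul : ∀ m n : ℕ, 1 ≤ m → 1 ≤ n → ∀ᵐ x ∂μ, T n (T m x) = T (n * m) x)
    (hA : MeasurableSet A) (k m n : ℕ) (hk : 1 ≤ k) (hm : 1 ≤ m) (hn : 1 ≤ n) :
    μ (T (m * k) ⁻¹' A ∩ T (n * k) ⁻¹' A) = μ (T m ⁻¹' A ∩ T n ⁻¹' A) := by
  have h1 : T (m * k) ⁻¹' A =ᵐ[μ] T k ⁻¹' (T m ⁻¹' A) := by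
    rw [Filter.eventuallyEq_set]
    filter_upwards [hmul k m hk hm] with x hx
    simp only [Set.mem_preimage, hx]
  have h2 : T (n * k) ⁻¹' A =ᵐ[μ] T k ⁻¹' (T n ⁻¹' A) := by
    rw [Filter.eventuallyEq_set]
    filter_upwards [hmul k n hk hn] with x hx
    simp only [Set.mem_preimage, hx]
  calc μ (T (m * k) ⁻¹' A ∩ T (n * k) ⁻¹' A)
      = μ (T k ⁻¹' (T m ⁻¹' A) ∩ T k ⁻¹' (T n ⁻¹' A)) := measure_congr (h1.inter h2)
    _ = μ (T k ⁻¹' (T m ⁻¹' A ∩ T n ⁻¹' A)) := by rw [Set.preimage_inter]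
    _ = μ (T m ⁻¹' A ∩ T n ⁻¹' A) := by
        apply (hmp k hk).measure_preimage
        exact (((hmp m hm).measurable hA).inter ((hmp n hn).measurable hA)).nullMeasurableSet

end Stmt6M

section Aux

variable {X : Type*} [MeasurableSpace X]

lemma stmt6_aux (μ : Measure X)
    [IsProbabilityMeasure μ] (T : ℕ → X → X)
    (hmp : ∀ n : ℕ, 1 ≤ n → MeasurePreserving (T n) μ μ)
    (hmul : ∀ m n : ℕ, 1 ≤ m → 1 ≤ n → ∀ᵐ x ∂μ, T n (T m x) = T (n * m) x)
    (a : ℕ) (ha : 1 ≤ a) (b d : ℤ)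
    (hgcd : Int.gcd (Int.gcd (a : ℤ) b : ℤ) d = 1)
    (habd : (a : ℤ) ∣ b * d) (hlt : b < d)
    (A : Set X) (hA : MeasurableSet A) (hApos : 0 < μ A) (N : ℕ) :
    ∃ n : ℕ, N ≤ n ∧ 0 < (a : ℤ) * n + b ∧ 0 < (a : ℤ) * n + d ∧
      0 < μ (T (((a : ℤ) * n + b).toNat) ⁻¹' A ∩ T (((a : ℤ) * n + d).toNat) ⁻¹' A) := by
  -- set up c
  set c : ℕ := (d - b).toNat with hcdef
  have hczpos : (0 : ℤ) < d - b := by omega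
  have hcz : (c : ℤ) = d - b := Int.toNat_of_nonneg (by omega)
  have hc : 1 ≤ c := by
    by_contra h
    push_neg at h
    interval_cases c <;> omega
  have hbdc : d = b + (c : ℤ) := by omega
  -- split a
  obtain ⟨ab, ad, habad, hcop, habb, hadd⟩ := Stmt6NT.gcd_split a ha b d hgcd habd
  have hab : 1 ≤ ab := by
    rcases Nat.eq_zero_or_pos ab with h | h
    · exfalso; rw [h] at habad; omega
    · exact h
  have had : 1 ≤ ad := by
    rcases Nat.eq_zero_or_pos ad with h | h
    · exfalso; rw [h] at habad; simp at habad; omega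
    · exact h
  -- choose K via pigeonhole bound
  have hμfin : μ A ≠ ⊤ := (measure_lt_top μ A).ne
  have hμne : μ A ≠ 0 := hApos.ne'
  obtain ⟨K, hK⟩ := ENNReal.exists_nat_gt (show (1 / μ A) ≠ ⊤ by
    simp [ENNReal.div_eq_top, hμne])
  have hKmul : 1 < (K : ENNReal) * μ A := by
    rw [ENNReal.div_lt_iff (Or.inl hμne) (Or.inl hμfin)] at hK
    exact hK
  have hK1 : 1 ≤ K := by
    by_contra h
    push_neg at h
    interval_cases K
    · simp at hKmul
  -- the family
  set N₀ : ℕ := a * N + b.natAbs + 1 with hN₀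
  obtain ⟨v, hv⟩ := Stmt6NT.construction ab ad c K N₀ b d hab had hcop hK1 hc habb hadd hbdc
  have hvpos : ∀ i, i ≤ K → 1 ≤ v i := by
    intro i hi
    rcases Nat.eq_or_lt_of_le hi with rfl | hiK
    · obtain ⟨h0, B, S, hje, hS, _, _, _⟩ := hv 0 i (by omega) le_rfl
      omega
    · exact (hv i K hiK le_rfl).1
  -- pigeonhole
  set Sets : ℕ → Set X := fun i => T (v (min i K)) ⁻¹' A with hSets
  have hmeas : ∀ i, MeasurableSet (Sets i) :=
    fun i => (hmp (v (min i K)) (hvpos _ (min_le_right i K))).measurable hA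
  have hμS : ∀ i, μ (Sets i) = μ A := fun i =>
    (hmp (v (min i K)) (hvpos _ (min_le_right i K))).measure_preimage hA.nullMeasurableSet
  have hsum : 1 < ∑ i ∈ Finset.range (K + 1), μ (Sets i) := by
    have : ∑ i ∈ Finset.range (K + 1), μ (Sets i) = (K + 1) • μ A := by
      rw [Finset.sum_congr rfl (fun i _ => hμS i), Finset.sum_const, Finset.card_range]
    rw [this, nsmul_eq_mul]
    calc (1 : ENNReal) < (K : ENNReal) * μ A := hKmul
      _ ≤ ((K + 1 : ℕ) : ENNReal) * μ A := by
          refine mul_le_mul_of_nonneg_right ?_ zero_le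
          exact_mod_cast Nat.le_succ K
  obtain ⟨i, j, hij, hjK1, hpos⟩ := Stmt6M.exists_pair μ (K + 1) Sets hmeas hsum
  have hjK : j ≤ K := by omega
  have hpos' : 0 < μ (T (v i) ⁻¹' A ∩ T (v j) ⁻¹' A) := by
    have hiK' : min i K = i := min_eq_left (by omega)
    have hjK' : min j K = j := min_eq_left hjK
    simpa only [hSets, hiK', hjK'] using hpos
  obtain ⟨hvi1, B, S, hvj, hS1, hBge, hBS, hdvd⟩ := hv i j hij hjK
  have hvj1 : 1 ≤ v j := by omega
  have hB1 : 1 ≤ B := by omega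
  have hBc1 : 1 ≤ B + c := by omega
  have e1 : v i * c = B * S := by
    rw [Nat.mul_comm, ← hBS]
  have e2 : v j * c = (B + c) * S := by
    calc v j * c = c * v i + c * S := by rw [hvj]; ring
      _ = B * S + c * S := by rw [hBS]
      _ = (B + c) * S := by ring
  have step1 := Stmt6M.scale_invariance μ hmp hmul hA c (v i) (v j) hc hvi1 hvj1
  have step2 := Stmt6M.scale_invariance μ hmp hmul hA S B (B + c) hS1 hB1 hBc1
  have key : 0 < μ (T B ⁻¹' A ∩ T (B + c) ⁻¹' A) := by
    rw [← step2, ← e1, ← e2, step1]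
    exact hpos'
  -- construct n
  rw [habad] at hdvd
  obtain ⟨k, hk⟩ := hdvd
  have hBz : ((N₀ : ℕ) : ℤ) + 1 ≤ (B : ℤ) := by exact_mod_cast hBge
  have hN₀z : ((N₀ : ℕ) : ℤ) = (a : ℤ) * N + b.natAbs + 1 := by
    rw [hN₀]; push_cast; ring
  have hble : b ≤ (b.natAbs : ℤ) := Int.le_natAbs
  have hklb : (N : ℤ) < k := by
    have h1 : (a : ℤ) * k = (B : ℤ) - b := hk.symm
    have h2 : (a : ℤ) * N + 2 ≤ (a : ℤ) * k := by omega
    have ha' : (0 : ℤ) < a := by exact_mod_cast ha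
    nlinarith
  set n : ℕ := k.toNat with hndef
  have hkn : (n : ℤ) = k := Int.toNat_of_nonneg (by omega)
  have hNn : N ≤ n := by
    have : (N : ℤ) < (n : ℤ) := by omega
    exact_mod_cast le_of_lt this
  have hBn : (a : ℤ) * n + b = ((B : ℕ) : ℤ) := by rw [hkn]; omega
  have hdn : (a : ℤ) * n + d = ((B + c : ℕ) : ℤ) := by push_cast; omega
  refine ⟨n, hNn, ?_, ?_, ?_⟩
  · rw [hBn]; exact_mod_cast hB1
  · rw [hdn]; exact_mod_cast hBc1
  · rw [show ((a : ℤ) * n + b).toNat = B by rw [hBn]; exact Int.toNat_natCast B,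
       show ((a : ℤ) * n + d).toNat = B + c by rw [hdn]; exact Int.toNat_natCast _]
    exact key

end Aux

theorem stmt6 {X : Type*} [MeasurableSpace X] (μ : Measure X)
    [IsProbabilityMeasure μ] (T : ℕ → X → X)
    (hmp : ∀ n : ℕ, 1 ≤ n → MeasurePreserving (T n) μ μ)
    (hmul : ∀ m n : ℕ, 1 ≤ m → 1 ≤ n → ∀ᵐ x ∂μ, T n (T m x) = T (n * m) x)
    (hfg : {S : X → X | ∃ p : ℕ, p.Prime ∧ T p = S}.Finite)
    (a : ℕ) (ha : 1 ≤ a) (b d : ℤ)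
    (hgcd : Int.gcd (Int.gcd (a : ℤ) b : ℤ) d = 1)
    (hbd : b = d ∨ (a : ℤ) ∣ b * d)
    (A : Set X) (hA : MeasurableSet A) (hApos : 0 < μ A) :
    ∀ N : ℕ, ∃ n, N ≤ n ∧ 0 < (a : ℤ) * n + b ∧ 0 < (a : ℤ) * n + d ∧
      0 < μ (T (((a : ℤ) * n + b).toNat) ⁻¹' A ∩ T (((a : ℤ) * n + d).toNat) ⁻¹' A) := by
  intro N
  rcases lt_trichotomy b d with hlt | heq | hgt
  · -- b < d
    have habd : (a : ℤ) ∣ b * d := by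
      rcases hbd with h | h
      · omega
      · exact h
    exact stmt6_aux μ T hmp hmul a ha b d hgcd habd hlt A hA hApos N
  · -- b = d : trivial diagonal case
    subst heq
    set n : ℕ := N + b.natAbs + 1 with hn
    have hna : (n : ℤ) ≤ (a : ℤ) * n := by
      have h1 : (1 : ℤ) ≤ (a : ℤ) := by exact_mod_cast ha
      nlinarith [Int.natCast_nonneg n]
    have hble : -(b.natAbs : ℤ) ≤ b := by
      rcases Int.natAbs_eq b with h | h <;> omega
    have hpos : 0 < (a : ℤ) * n + b := by
      have : (n : ℤ) = (N : ℤ) + b.natAbs + 1 := by rw [hn]; push_cast; ring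
      omega
    refine ⟨n, by omega, hpos, hpos, ?_⟩
    rw [Set.inter_self]
    have h1 : 1 ≤ ((a : ℤ) * n + b).toNat := by omega
    rw [(hmp _ h1).measure_preimage hA.nullMeasurableSet]
    exact hApos
  · -- d < b : apply aux with roles swapped
    have hgcd' : Int.gcd (Int.gcd (a : ℤ) d : ℤ) b = 1 := by
      rw [Int.gcd_assoc, Int.gcd_comm d b, ← Int.gcd_assoc]
      exact hgcd
    have habd : (a : ℤ) ∣ d * b := by
      rcases hbd with h | h
      · omega
      · rw [mul_comm]; exact h
    obtain ⟨n, hNn, h1, h2, h3⟩ :=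
      stmt6_aux μ T hmp hmul a ha d b hgcd' habd hgt A hA hApos N
    exact ⟨n, hNn, h2, h1, by rwa [Set.inter_comm]⟩
end

section
/- Let (p_n)_{n∈ℕ} and (q_n)_{n∈ℕ} be sequences of positive integers. Suppose that for every probability space (X, 𝒳, μ), every family of measure-preserving transformations T_m : X → X (m ∈ ℕ) satisfying T_m ∘ T_k = T_{mk} μ-almost everywhere for all m, k, and every A ∈ 𝒳 with μ(A) > 0, there exist infinitely many n ∈ ℕ with μ(T_{p_n}^{-1}A ∩ T_{q_n}^{-1}A) > 0. Then for every f ∈ 𝓜, liminf_{n→∞} |f(p_n) − f(q_n)| = 0. -/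
open MeasureTheory

noncomputable instance : MeasurableSpace Circle := borel Circle
instance : BorelSpace Circle := ⟨rfl⟩

theorem stmt8 (p q : ℕ → ℕ) (hp : ∀ n, 1 ≤ p n) (hq : ∀ n, 1 ≤ q n)
    (hrec : ∀ (Y : Type) (_ : MeasurableSpace Y) (μ : Measure Y),
      IsProbabilityMeasure μ →
      ∀ T : ℕ → Y → Y,
        (∀ k : ℕ, 1 ≤ k → MeasurePreserving (T k) μ μ) →
        (∀ m k : ℕ, 1 ≤ m → 1 ≤ k → ∀ᵐ x ∂μ, T m (T k x) = T (m * k) x) →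
        ∀ A : Set Y, MeasurableSet A → 0 < μ A →
          ∀ N : ℕ, ∃ n, N ≤ n ∧ 0 < μ (T (p n) ⁻¹' A ∩ T (q n) ⁻¹' A))
    (f : ℕ → ℂ) (hf : IsUnitCM f) :
    ∀ ε : ℝ, 0 < ε → ∀ N : ℕ, ∃ n, N ≤ n ∧
      ‖f (p n) - f (q n)‖ < ε := by
  intro ε hε N
  obtain ⟨hf1, hfmul, hfabs⟩ := hf
  -- the multiplicative function as a map into the circle
  set g : ℕ → Circle := fun k => if h : 1 ≤ k then
      ⟨f k, by simp [Submonoid.unitSphere, mem_sphere_iff_norm, hfabs k h]⟩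
    else 1 with hg
  have hgval : ∀ k, 1 ≤ k → (g k : ℂ) = f k := by
    intro k hk; simp [hg, hk]
  have hgmul : ∀ m k, 1 ≤ m → 1 ≤ k → g (m * k) = g m * g k := by
    intro m k hm hk
    ext
    push_cast
    rw [hgval _ (Nat.one_le_iff_ne_zero.2 (Nat.mul_ne_zero (by omega) (by omega))),
      hgval _ hm, hgval _ hk, hfmul m k hm hk]
  set μ : Measure Circle := Measure.haarMeasure (⊤ : TopologicalSpace.PositiveCompacts Circle)
    with hμ
  have hprob : IsProbabilityMeasure μ := by
    constructor
    have := Measure.haarMeasure_self (K₀ := (⊤ : TopologicalSpace.PositiveCompacts Circle))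
    simpa [hμ, TopologicalSpace.PositiveCompacts.coe_top] using this
  set T : ℕ → Circle → Circle := fun k x => g k * x with hT
  have hTmp : ∀ k : ℕ, 1 ≤ k → MeasurePreserving (T k) μ μ := by
    intro k _
    exact measurePreserving_mul_left μ (g k)
  have hTcomp : ∀ m k : ℕ, 1 ≤ m → 1 ≤ k → ∀ᵐ x ∂μ, T m (T k x) = T (m * k) x := by
    intro m k hm hk
    filter_upwards with x
    simp [hT, hgmul m k hm hk, mul_assoc]
  set A : Set Circle := {z : Circle | ‖(z : ℂ) - 1‖ < ε / 2} with hA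
  have hAopen : IsOpen A := by
    have : Continuous fun z : Circle => ‖(z : ℂ) - 1‖ :=
      continuous_norm.comp (continuous_subtype_val.sub continuous_const)
    exact isOpen_lt this continuous_const
  have hAmeas : MeasurableSet A := hAopen.measurableSet
  have hApos : 0 < μ A := by
    refine hAopen.measure_pos μ ⟨1, ?_⟩
    simp [hA, half_pos hε]
  obtain ⟨n, hn, hpos⟩ := hrec Circle _ μ hprob T hTmp hTcomp A hAmeas hApos N
  refine ⟨n, hn, ?_⟩
  obtain ⟨x, hx1, hx2⟩ := nonempty_of_measure_ne_zero hpos.ne'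
  have h1 : ‖(g (p n) : ℂ) * x - 1‖ < ε / 2 := by
    simpa [hT, hA] using hx1
  have h2 : ‖(g (q n) : ℂ) * x - 1‖ < ε / 2 := by
    simpa [hT, hA] using hx2
  have hxabs : ‖(x : ℂ)‖ = 1 := by
    exact mem_sphere_zero_iff_norm.1 x.2
  calc ‖f (p n) - f (q n)‖
      = ‖f (p n) - f (q n)‖ * ‖(x : ℂ)‖ := by rw [hxabs, mul_one]
    _ = ‖(f (p n) * x - 1) - (f (q n) * x - 1)‖ := by
        rw [← norm_mul]; congr 1; ring
    _ ≤ ‖f (p n) * x - 1‖ + ‖f (q n) * x - 1‖ :=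
        norm_sub_le _ _
    _ < ε / 2 + ε / 2 := by
        rw [← hgval _ (hp n), ← hgval _ (hq n)]
        exact add_lt_add h1 h2
    _ = ε := by ring
end

section
/- For every positive integer ℓ and every complex number a with |a| = 1, there exists j ∈ {0, 1, …, ℓ−1} such that |a − e(j/ℓ)| ≤ (π/(2ℓ))·|a^ℓ − 1|. -/
open Complex Real

lemma two_sin_mul_I (z : ℂ) :
    2 * Complex.sin z * Complex.I = Complex.exp (z * Complex.I) - Complex.exp (-z * Complex.I) := by
  rw [Complex.sin]
  linear_combination (Complex.exp (-z * Complex.I) - Complex.exp (z * Complex.I)) * Complex.I_sq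

lemma abs_exp_mul_I_sub_exp_mul_I (x y : ℝ) :
    ‖Complex.exp (x * Complex.I) - Complex.exp (y * Complex.I)‖ =
      2 * |Real.sin ((x - y) / 2)| := by
  have key : Complex.exp ((x : ℂ) * Complex.I) - Complex.exp ((y : ℂ) * Complex.I)
      = Complex.exp ((((x + y) / 2 : ℝ) : ℂ) * Complex.I) *
        (2 * Complex.sin ((((x - y) / 2 : ℝ) : ℂ)) * Complex.I) := by
    rw [two_sin_mul_I, mul_sub, ← Complex.exp_add, ← Complex.exp_add]
    congr 1
    · congr 1; push_cast; ring
    · congr 1; push_cast; ring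
  rw [key, norm_mul, Complex.norm_exp_ofReal_mul_I, one_mul, norm_mul, Complex.norm_I, mul_one,
    norm_mul, Complex.norm_two, ← Complex.ofReal_sin, Complex.norm_real, Real.norm_eq_abs]

theorem stmt12 (ℓ : ℕ) (hℓ : 1 ≤ ℓ) (a : ℂ) (ha : ‖a‖ = 1) :
    ∃ j : ℕ, j < ℓ ∧
      ‖(a - Complex.exp (2 * Real.pi * Complex.I * ((j : ℂ) / (ℓ : ℂ))))‖ ≤
        Real.pi / (2 * ℓ) * ‖(a ^ ℓ - 1)‖ := by
  have hℓR : (0 : ℝ) < ℓ := by exact_mod_cast hℓ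
  set t := a.arg with ht
  have ha2 : a = Complex.exp ((t : ℂ) * Complex.I) := by
    conv_lhs => rw [← Complex.norm_mul_exp_arg_mul_I a]
    rw [ha]; simp [ht]
  set m : ℤ := round ((ℓ : ℝ) * t / (2 * π)) with hm
  set δ : ℝ := (ℓ : ℝ) * t / (2 * π) - m with hδ
  have hδle : |δ| ≤ 1 / 2 := abs_sub_round _
  clear_value m δ
  clear hm
  have hℓZ : (0 : ℤ) < (ℓ : ℤ) := by exact_mod_cast hℓ
  have h0 : 0 ≤ m % (ℓ : ℤ) := Int.emod_nonneg m (by omega)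
  have h1 : m % (ℓ : ℤ) < (ℓ : ℤ) := Int.emod_lt_of_pos m hℓZ
  refine ⟨(m % (ℓ : ℤ)).toNat, by omega, ?_⟩
  have h2int : (((m % (ℓ : ℤ)).toNat : ℕ) : ℤ) = m - ℓ * (m / ℓ) := by
    rw [Int.toNat_of_nonneg h0, Int.emod_def]
  have hqC : (((m % (ℓ : ℤ)).toNat : ℕ) : ℂ) = (m : ℂ) - (ℓ : ℂ) * ((m / (ℓ : ℤ) : ℤ) : ℂ) := by
    exact_mod_cast congrArg (Int.cast : ℤ → ℂ) h2int
  have hℓne : ((ℓ : ℂ)) ≠ 0 := by exact_mod_cast hℓR.ne'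
  have hroot : Complex.exp (2 * (π : ℂ) * Complex.I * (((m % (ℓ : ℤ)).toNat : ℂ) / (ℓ : ℂ))) =
      Complex.exp (((2 * π * m / ℓ : ℝ) : ℂ) * Complex.I) := by
    have hz : (2 * (π : ℂ) * Complex.I * (((m % (ℓ : ℤ)).toNat : ℂ) / (ℓ : ℂ))) =
        ((2 * π * m / ℓ : ℝ) : ℂ) * Complex.I
          + ((-(m / (ℓ : ℤ)) : ℤ) : ℂ) * (2 * π * Complex.I) := by
      rw [hqC]
      push_cast
      field_simp
      ring
    rw [hz, Complex.exp_add, Complex.exp_int_mul_two_pi_mul_I, mul_one]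
  rw [hroot, ha2, ← Complex.exp_nat_mul]
  have hpow : ((ℓ : ℂ) * ((t : ℂ) * Complex.I)) = ((ℓ * t : ℝ) : ℂ) * Complex.I := by
    push_cast; ring
  have hone : (1 : ℂ) = Complex.exp (((0 : ℝ) : ℂ) * Complex.I) := by simp
  rw [hpow, hone, abs_exp_mul_I_sub_exp_mul_I, abs_exp_mul_I_sub_exp_mul_I]
  -- now a real inequality
  have hpi : (0 : ℝ) < π := Real.pi_pos
  have ht1 : t = 2 * π * (m + δ) / ℓ := by
    rw [hδ]; field_simp; ring
  have harg1 : (t - 2 * π * m / ℓ) / 2 = π * δ / ℓ := by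
    rw [ht1]; field_simp; ring
  have harg2 : (ℓ * t - 0) / 2 = π * δ + m * π := by
    rw [ht1]; field_simp; ring
  rw [harg1, harg2, Real.sin_add_int_mul_pi, abs_mul]
  have habs1 : |((-1 : ℝ)) ^ m| = 1 := by
    rcases Int.even_or_odd m with h | h
    · rw [h.neg_one_zpow]; simp
    · rw [Odd.neg_one_zpow h]; simp
  rw [habs1, one_mul]
  -- |sin(πδ/ℓ)| ≤ |πδ/ℓ| = π|δ|/ℓ and |sin(πδ)| ≥ 2|δ|
  have hL : |Real.sin (π * δ / ℓ)| ≤ π * |δ| / ℓ := by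
    calc |Real.sin (π * δ / ℓ)| ≤ |π * δ / ℓ| := Real.abs_sin_le_abs
      _ = π * |δ| / ℓ := by
        rw [abs_div, abs_mul, abs_of_pos hpi, abs_of_pos hℓR]
  have hR : 2 * |δ| ≤ |Real.sin (π * δ)| := by
    have hd0 : 0 ≤ |δ| := abs_nonneg δ
    have h2 : π * |δ| ≤ π / 2 := by
      have := mul_le_mul_of_nonneg_left hδle hpi.le
      linarith
    have h3 : (2 / π) * (π * |δ|) ≤ Real.sin (π * |δ|) :=
      Real.mul_le_sin (by positivity) h2
    have h4 : Real.sin (π * |δ|) = |Real.sin (π * δ)| := by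
      rcases abs_cases δ with ⟨h, h'⟩ | ⟨h, h'⟩
      · rw [h]
        refine (_root_.abs_of_nonneg (Real.sin_nonneg_of_nonneg_of_le_pi
          (mul_nonneg hpi.le h') ?_)).symm
        have : δ ≤ 1 / 2 := by rw [← h]; exact hδle
        have := mul_le_mul_of_nonneg_left this hpi.le
        linarith
      · rw [h, mul_neg, Real.sin_neg]
        have hs : Real.sin (π * δ) ≤ 0 := by
          rw [show π * δ = -(π * -δ) by ring, Real.sin_neg, neg_nonpos]
          refine Real.sin_nonneg_of_nonneg_of_le_pi
            (mul_nonneg hpi.le (by linarith)) ?_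
          have hd2 : -δ ≤ 1 / 2 := by rw [← h]; exact hδle
          have := mul_le_mul_of_nonneg_left hd2 hpi.le
          linarith
        rw [_root_.abs_of_nonpos hs]
    rw [← h4]
    calc 2 * |δ| = (2 / π) * (π * |δ|) := by field_simp
      _ ≤ _ := h3
  calc 2 * |Real.sin (π * δ / ℓ)| ≤ 2 * (π * |δ| / ℓ) := by linarith
    _ = π / (2 * ℓ) * (2 * (2 * |δ|)) := by field_simp
    _ ≤ π / (2 * ℓ) * (2 * |Real.sin (π * δ)|) := by
        have h5 : (0:ℝ) ≤ π / (2 * ℓ) := by positivity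
        exact mul_le_mul_of_nonneg_left (by linarith) h5
end

section
/- Let p, q be positive integers and let f : ℕ → ℂ be a multiplicative function with |f(n)| ≤ 1 for all n, such that both f^p and f^q are pretentious. Then f^d is pretentious, where d = gcd(p,q). -/
/-- The square of the pretentious distance `𝔻(f,g;1,X)²`. -/
noncomputable def pretDistSq (f g : ℕ → ℂ) (X : ℕ) : ℝ :=
  ∑ p ∈ (Finset.Icc 1 X).filter Nat.Prime,
    (1 - (f p * (starRingEnd ℂ) (g p)).re) / p

/-- The archimedean twist `n ↦ χ(n) n^{it}` of a Dirichlet character. -/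
noncomputable def charTwist {q : ℕ} (χ : DirichletCharacter ℂ q) (t : ℝ) : ℕ → ℂ :=
  fun n => χ (n : ZMod q) * Complex.exp (Complex.I * t * Real.log n)

/-- `f` is pretentious: `𝔻(f(n), χ(n) n^{it}) < ∞` for some Dirichlet character `χ`
and real `t`.  Since the partial sums defining the distance are nondecreasing with
nonnegative terms, finiteness of the limit is equivalent to boundedness. -/
def Pretentious (f : ℕ → ℂ) : Prop :=
  ∃ q : ℕ, 1 ≤ q ∧ ∃ (χ : DirichletCharacter ℂ q) (t : ℝ) (C : ℝ),
    ∀ X : ℕ, pretDistSq f (charTwist χ t) X ≤ C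

lemma key_ineq (z w : ℂ) (hz : ‖z‖ ≤ 1) (hw : ‖w‖ ≤ 1) :
    1 - (z * w).re ≤ 2 * (1 - z.re) + 2 * (1 - w.re) := by
  have hz2 : z.re * z.re + z.im * z.im ≤ 1 := by
    have h := Complex.sq_norm z
    rw [Complex.normSq_apply] at h
    nlinarith [norm_nonneg z]
  have hw2 : w.re * w.re + w.im * w.im ≤ 1 := by
    have h := Complex.sq_norm w
    rw [Complex.normSq_apply] at h
    nlinarith [norm_nonneg w]
  rw [Complex.mul_re]
  nlinarith [sq_nonneg (z.im - w.im), sq_nonneg (z.re - w.re), sq_nonneg (z.re + w.re),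
    sq_nonneg (1 - z.re), sq_nonneg (1 - w.re)]

lemma re_bd {z : ℂ} (hz : ‖z‖ ≤ 1) : -1 ≤ z.re ∧ z.re ≤ 1 := by
  have h := Complex.abs_re_le_norm z
  exact abs_le.mp (h.trans hz)

lemma pow_ineq : ∀ (k : ℕ) (z : ℂ), ‖z‖ ≤ 1 →
    1 - (z ^ k).re ≤ 4 ^ k * (1 - z.re) := by
  intro k
  induction k with
  | zero => intro z hz; simp; have := (re_bd hz).2; linarith
  | succ n ih =>
    intro z hz
    have h1 : ‖z ^ n‖ ≤ 1 := by
      rw [norm_pow]; exact pow_le_one₀ (norm_nonneg z) hz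
    have h2 := key_ineq (z ^ n) z h1 hz
    have h3 := ih z hz
    have h4 : (0:ℝ) ≤ 1 - z.re := by have := (re_bd hz).2; linarith
    have h5 : (1:ℝ) ≤ 4 ^ n := one_le_pow₀ (by norm_num)
    rw [pow_succ z n, pow_succ (4:ℝ) n]
    nlinarith

lemma one_sub_pow_le' (x : ℝ) (hx0 : 0 ≤ x) (hx1 : x ≤ 1) : ∀ k : ℕ, 1 - x ^ k ≤ k * (1 - x) := by
  intro k
  induction k with
  | zero => simp
  | succ n ih =>
    have hxn : x ^ n ≤ 1 := pow_le_one₀ hx0 hx1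
    rw [pow_succ]
    push_cast
    nlinarith

lemma bezout_nat (p q : ℕ) (hp : 1 ≤ p) (hq : 1 ≤ q) :
    ∃ u v : ℕ, u * p = Nat.gcd p q + v * q := by
  have hg := Nat.gcd_eq_gcd_ab p q
  set a := Nat.gcdA p q with ha
  set b := Nat.gcdB p q with hb
  set k : ℤ := a.natAbs + b.natAbs + 1 with hk
  have h1 : -(a.natAbs : ℤ) ≤ a := by
    have := Int.le_natAbs (a := -a); simp at this; omega
  have h1b : b ≤ (b.natAbs : ℤ) := Int.le_natAbs
  have h2q : (1:ℤ) ≤ q := by exact_mod_cast hq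
  have h2p : (1:ℤ) ≤ p := by exact_mod_cast hp
  have hka : 0 ≤ a + k * q := by
    nlinarith [Int.natCast_nonneg a.natAbs, Int.natCast_nonneg b.natAbs]
  have hkb : 0 ≤ k * p - b := by
    nlinarith [Int.natCast_nonneg a.natAbs, Int.natCast_nonneg b.natAbs]
  refine ⟨(a + k * q).toNat, (k * p - b).toNat, ?_⟩
  have key : ((a + k * q).toNat : ℤ) * p = Nat.gcd p q + ((k * p - b).toNat : ℤ) * q := by
    rw [Int.toNat_of_nonneg hka, Int.toNat_of_nonneg hkb, hg]; ring
  exact_mod_cast key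

lemma abs_charTwist {m : ℕ} (χ : DirichletCharacter ℂ m) (t : ℝ) (n : ℕ) :
    ‖charTwist χ t n‖ ≤ 1 := by
  unfold charTwist
  rw [norm_mul]
  have h1 : ‖χ (n : ZMod m)‖ ≤ 1 := by
    exact DirichletCharacter.norm_le_one χ (n : ZMod m)
  have h2 : ‖Complex.exp (Complex.I * t * Real.log n)‖ = 1 := by
    rw [Complex.norm_exp]
    have h0 : (Complex.I * t * ((Real.log n : ℝ) : ℂ)).re = 0 := by
      rw [Complex.mul_re, Complex.mul_re]
      simp only [Complex.I_re, Complex.I_im, Complex.ofReal_re, Complex.ofReal_im]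
      ring
    rw [h0, Real.exp_zero]
  rw [h2, mul_one]
  exact h1

lemma abs_term_le {F w : ℂ} (hF : ‖F‖ ≤ 1) (hw : ‖w‖ ≤ 1) (k : ℕ) :
    ‖F ^ k * (starRingEnd ℂ) w‖ ≤ 1 := by
  rw [norm_mul, norm_pow, Complex.norm_conj]
  exact mul_le_one₀ (pow_le_one₀ (norm_nonneg F) hF) (norm_nonneg w) hw

lemma conj_exp_twist (s L : ℝ) :
    (starRingEnd ℂ) (Complex.exp (Complex.I * s * L)) = Complex.exp (-(Complex.I * s * L)) := by
  rw [← Complex.exp_conj]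
  congr 1
  rw [map_mul, map_mul, Complex.conj_I, Complex.conj_ofReal, Complex.conj_ofReal]
  ring

set_option maxHeartbeats 1000000 in
theorem stmt13 (p q : ℕ) (hp : 1 ≤ p) (hq : 1 ≤ q) (f : ℕ → ℂ)
    (hmul : f 1 = 1 ∧ ∀ m n : ℕ, 1 ≤ m → 1 ≤ n → Nat.Coprime m n →
      f (m * n) = f m * f n)
    (hbdd : ∀ n : ℕ, ‖f n‖ ≤ 1)
    (hfp : Pretentious (fun n => f n ^ p)) (hfq : Pretentious (fun n => f n ^ q)) :
    Pretentious (fun n => f n ^ Nat.gcd p q) := by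
  classical
  obtain ⟨q1, hq1, χ1, t1, C1, hC1⟩ := hfp
  obtain ⟨q2, hq2, χ2, t2, C2, hC2⟩ := hfq
  obtain ⟨u, v, huv⟩ := bezout_nat p q hp hq
  set d := Nat.gcd p q with hd
  have hdvd1 : q1 ∣ q1 * q2 := dvd_mul_right q1 q2
  have hdvd2 : q2 ∣ q1 * q2 := dvd_mul_left q2 q1
  set M := q1 * q2 with hM
  have hM1 : 1 ≤ M := Nat.one_le_iff_ne_zero.mpr (Nat.mul_ne_zero (by omega) (by omega))
  set χ : DirichletCharacter ℂ M :=
    (DirichletCharacter.changeLevel hdvd1 χ1) ^ u *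
      ((DirichletCharacter.changeLevel hdvd2 χ2).ringHomComp (starRingEnd ℂ)) ^ v with hχ
  set t : ℝ := u * t1 - v * t2 with ht
  set Cst : ℝ := 2 * 4 ^ u + 2 * 4 ^ v + 2 * ((q : ℝ) * v) with hCst
  have hCst0 : (0:ℝ) ≤ Cst := by positivity
  refine ⟨M, hM1, χ, t, Cst * (C1 + C2) + M, fun X => ?_⟩
  set S := (Finset.Icc 1 X).filter Nat.Prime with hS
  have key : ∀ r ∈ S,
      (1 - (f r ^ d * (starRingEnd ℂ) (charTwist χ t r)).re) / r ≤
      Cst * ((1 - (f r ^ p * (starRingEnd ℂ) (charTwist χ1 t1 r)).re) / r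
           + (1 - (f r ^ q * (starRingEnd ℂ) (charTwist χ2 t2 r)).re) / r)
      + (if r.Coprime M then 0 else 1) := by
    intro r hrS
    rw [hS, Finset.mem_filter] at hrS
    obtain ⟨-, hrp⟩ := hrS
    have hF : ‖f r‖ ≤ 1 := hbdd r
    have hrpos : (0:ℝ) < r := by exact_mod_cast hrp.pos
    set z1 := f r ^ p * (starRingEnd ℂ) (charTwist χ1 t1 r) with hz1
    set z2 := f r ^ q * (starRingEnd ℂ) (charTwist χ2 t2 r) with hz2
    set w := f r ^ d * (starRingEnd ℂ) (charTwist χ t r) with hw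
    have habs1 : ‖z1‖ ≤ 1 := abs_term_le hF (abs_charTwist _ _ _) p
    have habs2 : ‖z2‖ ≤ 1 := abs_term_le hF (abs_charTwist _ _ _) q
    have habsw : ‖w‖ ≤ 1 := abs_term_le hF (abs_charTwist _ _ _) d
    have hn1 : (0:ℝ) ≤ 1 - z1.re := by have := (re_bd habs1).2; linarith
    have hn2 : (0:ℝ) ≤ 1 - z2.re := by have := (re_bd habs2).2; linarith
    have hnonneg : 0 ≤ Cst * ((1 - z1.re) / r + (1 - z2.re) / r) :=
      mul_nonneg hCst0 (add_nonneg (div_nonneg hn1 hrpos.le) (div_nonneg hn2 hrpos.le))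
    by_cases hco : r.Coprime M
    · -- coprime case
      rw [if_pos hco, add_zero]
      set L : ℝ := Real.log r with hL
      set a := χ1 ((r : ℕ) : ZMod q1) with hav
      set b := χ2 ((r : ℕ) : ZMod q2) with hbv
      have hval : χ ((r : ℕ) : ZMod M) = a ^ u * (starRingEnd ℂ) b ^ v := by
        have hwU : ((ZMod.unitOfCoprime r hco : (ZMod M)ˣ) : ZMod M) = ((r : ℕ) : ZMod M) :=
          ZMod.coe_unitOfCoprime r hco
        rw [← hwU, hχ]
        rw [MulChar.coeToFun_mul, Pi.mul_apply, MulChar.pow_apply_coe, MulChar.pow_apply_coe,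
          MulChar.ringHomComp_apply, DirichletCharacter.changeLevel_eq_cast_of_dvd χ1 hdvd1,
          DirichletCharacter.changeLevel_eq_cast_of_dvd χ2 hdvd2, hwU,
          ZMod.cast_natCast hdvd1, ZMod.cast_natCast hdvd2]
      set s : ℝ := Complex.normSq (f r) ^ (v * q) with hs
      have e1 : (starRingEnd ℂ) (charTwist χ1 t1 r)
          = (starRingEnd ℂ) a * Complex.exp (-(Complex.I * t1 * L)) := by
        simp only [charTwist, map_mul, conj_exp_twist, hav, hL]
      have e2 : (starRingEnd ℂ) z2
          = ((starRingEnd ℂ) (f r)) ^ q * (b * Complex.exp (Complex.I * t2 * L)) := by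
        rw [hz2, map_mul, map_pow, Complex.conj_conj]
        simp only [charTwist, hbv, hL]
      have e3 : (starRingEnd ℂ) (charTwist χ t r)
          = ((starRingEnd ℂ) a) ^ u * b ^ v * Complex.exp (-(Complex.I * t * L)) := by
        simp only [charTwist, map_mul, conj_exp_twist, hL]
        rw [hval, map_mul, map_pow, map_pow, Complex.conj_conj]
      have hexp : Complex.exp (-(Complex.I * t1 * L)) ^ u
            * Complex.exp (Complex.I * t2 * L) ^ v
          = Complex.exp (-(Complex.I * t * L)) := by
        rw [← Complex.exp_nat_mul, ← Complex.exp_nat_mul, ← Complex.exp_add]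
        congr 1
        rw [ht]
        push_cast
        ring
      have hFpart : f r ^ (p * u) * ((starRingEnd ℂ) (f r)) ^ (q * v)
          = ((s : ℝ) : ℂ) * f r ^ d := by
        have hpu : p * u = d + v * q := by rw [mul_comm p u]; exact huv
        rw [hpu, pow_add, mul_comm q v]
        calc f r ^ d * f r ^ (v * q) * ((starRingEnd ℂ) (f r)) ^ (v * q)
            = f r ^ d * (f r * (starRingEnd ℂ) (f r)) ^ (v * q) := by rw [mul_pow]; ring
          _ = f r ^ d * ((Complex.normSq (f r) : ℂ)) ^ (v * q) := by rw [Complex.mul_conj]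
          _ = ((s : ℝ) : ℂ) * f r ^ d := by rw [hs]; push_cast; ring
      have heq : z1 ^ u * ((starRingEnd ℂ) z2) ^ v = ((s : ℝ) : ℂ) * w := by
        have expand : z1 ^ u * ((starRingEnd ℂ) z2) ^ v
            = (f r ^ (p * u) * ((starRingEnd ℂ) (f r)) ^ (q * v)) *
              (((starRingEnd ℂ) a) ^ u * b ^ v) *
              (Complex.exp (-(Complex.I * t1 * L)) ^ u
                * Complex.exp (Complex.I * t2 * L) ^ v) := by
          rw [hz1, e1, e2]
          ring
        rw [expand, hFpart, hexp, hw, e3]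
        ring
      -- bounds
      have hx0 : 0 ≤ ‖f r‖ := norm_nonneg _
      have hns : Complex.normSq (f r) = ‖f r‖ ^ 2 := (Complex.sq_norm _).symm
      have hnsle : Complex.normSq (f r) ≤ 1 := by rw [hns]; nlinarith
      have hs0 : 0 ≤ s := by rw [hs]; exact pow_nonneg (Complex.normSq_nonneg _) _
      have hs1 : s ≤ 1 := by
        rw [hs]; exact pow_le_one₀ (Complex.normSq_nonneg _) hnsle
      have hwre := (re_bd habsw).1
      have hsw : 1 - s * w.re ≤ 2 * 4 ^ u * (1 - z1.re) + 2 * 4 ^ v * (1 - z2.re) := by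
        have h0 : s * w.re = (((s : ℝ) : ℂ) * w).re := (Complex.re_ofReal_mul s w).symm
        rw [h0, ← heq]
        have hc2 : ‖(starRingEnd ℂ) z2‖ ≤ 1 := by rw [Complex.norm_conj]; exact habs2
        have k1 := key_ineq (z1 ^ u) (((starRingEnd ℂ) z2) ^ v)
          (by rw [norm_pow]; exact pow_le_one₀ (norm_nonneg _) habs1)
          (by rw [norm_pow]; exact pow_le_one₀ (norm_nonneg _) hc2)
        have k2 := pow_ineq u z1 habs1
        have k3 := pow_ineq v ((starRingEnd ℂ) z2) hc2
        rw [Complex.conj_re] at k3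
        have h4u : (1:ℝ) ≤ 4 ^ u := one_le_pow₀ (by norm_num)
        have h4v : (1:ℝ) ≤ 4 ^ v := one_le_pow₀ (by norm_num)
        nlinarith
      have hs_le : 1 - s ≤ 2 * ((q : ℝ) * v) * (1 - z1.re) := by
        set x := ‖f r‖ with hxd
        have hxp : x ^ p ≤ x := pow_le_of_le_one hx0 hF (by omega)
        have hz1x : z1.re ≤ x ^ p := by
          have h1 := Complex.re_le_norm z1
          have h2 : ‖z1‖ ≤ x ^ p := by
            rw [hz1, norm_mul, norm_pow, Complex.norm_conj]
            calc x ^ p * ‖charTwist χ1 t1 r‖ ≤ x ^ p * 1 :=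
                  mul_le_mul_of_nonneg_left (abs_charTwist _ _ _) (by positivity)
              _ = x ^ p := mul_one _
          linarith
        have h1 : 1 - (x ^ 2) ^ (v * q) ≤ (v * q : ℕ) * (1 - x ^ 2) :=
          one_sub_pow_le' (x ^ 2) (by positivity) (by nlinarith) (v * q)
        have hA : 1 - x ^ 2 ≤ 2 * (1 - z1.re) := by nlinarith
        have hvq : (0:ℝ) ≤ ((v * q : ℕ) : ℝ) := by positivity
        rw [hs, hns]
        calc 1 - (x ^ 2) ^ (v * q) ≤ ((v * q : ℕ) : ℝ) * (1 - x ^ 2) := h1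
          _ ≤ ((v * q : ℕ) : ℝ) * (2 * (1 - z1.re)) := mul_le_mul_of_nonneg_left hA hvq
          _ = 2 * ((q : ℝ) * v) * (1 - z1.re) := by push_cast; ring
      have hmain : 1 - w.re ≤ (2 * 4 ^ u + 2 * ((q:ℝ) * v)) * (1 - z1.re)
          + 2 * 4 ^ v * (1 - z2.re) := by
        have hprod : 0 ≤ (1 - s) * (1 + w.re) := mul_nonneg (by linarith) (by linarith)
        have hprod' : 0 ≤ 1 - s + w.re - s * w.re := by nlinarith
        linarith
      have hnum : 1 - w.re ≤ Cst * ((1 - z1.re) + (1 - z2.re)) := by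
        have hc1 : (2 * 4 ^ u + 2 * ((q:ℝ) * v)) * (1 - z1.re) ≤ Cst * (1 - z1.re) := by
          apply mul_le_mul_of_nonneg_right _ hn1
          rw [hCst]
          have : (0:ℝ) < 4 ^ v := by positivity
          linarith
        have hc2 : 2 * 4 ^ v * (1 - z2.re) ≤ Cst * (1 - z2.re) := by
          apply mul_le_mul_of_nonneg_right _ hn2
          rw [hCst]
          have h1 : (0:ℝ) < 4 ^ u := by positivity
          have h2 : (0:ℝ) ≤ (q:ℝ) * v := by positivity
          linarith
        calc 1 - w.re ≤ (2 * 4 ^ u + 2 * ((q:ℝ) * v)) * (1 - z1.re)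
              + 2 * 4 ^ v * (1 - z2.re) := hmain
          _ ≤ Cst * (1 - z1.re) + Cst * (1 - z2.re) := add_le_add hc1 hc2
          _ = Cst * ((1 - z1.re) + (1 - z2.re)) := by ring
      calc (1 - w.re) / r ≤ (Cst * ((1 - z1.re) + (1 - z2.re))) / r :=
            (div_le_div_iff_of_pos_right hrpos).mpr hnum
        _ = Cst * ((1 - z1.re) / r + (1 - z2.re) / r) := by ring
    · -- non-coprime case
      rw [if_neg hco]
      have hwre := (re_bd habsw).1
      have hr2 : (2:ℝ) ≤ r := by exact_mod_cast hrp.two_le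
      have hle : (1 - w.re) / r ≤ 1 := by
        rw [div_le_one hrpos]
        linarith
      linarith
  -- sum everything
  simp only [pretDistSq]
  have hmono := Finset.sum_le_sum key
  refine le_trans hmono ?_
  rw [Finset.sum_add_distrib, ← Finset.mul_sum, Finset.sum_add_distrib]
  have h1 := hC1 X
  have h2 := hC2 X
  simp only [pretDistSq] at h1 h2
  rw [← hS] at h1 h2
  have hind : (∑ r ∈ S, (if r.Coprime M then (0:ℝ) else 1)) ≤ M := by
    have hrw : (∑ r ∈ S, (if r.Coprime M then (0:ℝ) else 1))
        = ((S.filter (fun r => ¬ r.Coprime M)).card : ℝ) := by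
      rw [← Finset.sum_boole]
      apply Finset.sum_congr rfl
      intro r _
      by_cases h : r.Coprime M <;> simp [h]
    rw [hrw]
    have hsub : S.filter (fun r => ¬ r.Coprime M) ⊆ Finset.Icc 1 M := by
      intro r hr
      simp only [hS, Finset.mem_filter, Finset.mem_Icc] at hr ⊢
      obtain ⟨⟨⟨hr1, _⟩, hrp⟩, hnc⟩ := hr
      have hdvd : r ∣ M := by
        by_contra hnd
        exact hnc ((Nat.Prime.coprime_iff_not_dvd hrp).mpr hnd)
      exact ⟨hr1, Nat.le_of_dvd (by omega) hdvd⟩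
    have hcard : (S.filter (fun r => ¬ r.Coprime M)).card ≤ M := by
      have := Finset.card_le_card hsub
      simpa [Nat.card_Icc] using this
    exact_mod_cast hcard
  have hCsum : Cst * ((∑ r ∈ S, (1 - (f r ^ p * (starRingEnd ℂ) (charTwist χ1 t1 r)).re) / r)
      + (∑ r ∈ S, (1 - (f r ^ q * (starRingEnd ℂ) (charTwist χ2 t2 r)).re) / r))
      ≤ Cst * (C1 + C2) := mul_le_mul_of_nonneg_left (add_le_add h1 h2) hCst0
  linarith
end

section
/- There is an absolute constant c > 0 with the following property: for every completely multiplicative function f : ℕ → ℂ with |f(n)| ≤ 1 for all n, every K ∈ ℕ (K ≥ 1), and every prime p dividing all the elements of Φ_K (i.e., p ∈ {p_1, …, p_K}), one has |(1 − f(p)) · (1/|Φ_K|) Σ_{n ∈ Φ_K} f(n)| ≤ c·2^{−K}. -/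
def IsCM (f : ℕ → ℂ) : Prop :=
  f 1 = 1 ∧ ∀ m n : ℕ, 1 ≤ m → 1 ≤ n → f (m * n) = f m * f n

noncomputable def Phi (K : ℕ) : Finset ℕ :=
  Finset.image (fun θ : Fin K → ℕ => ∏ i : Fin K, Nat.nth Nat.Prime i ^ θ i)
    (Fintype.piFinset fun _ : Fin K => Finset.Ioc (2 ^ K) (2 ^ (K + 1)))

lemma cm_pow {f : ℕ → ℂ} (hf : IsCM f) {n : ℕ} (hn : 1 ≤ n) :
    ∀ k : ℕ, 1 ≤ k → f (n ^ k) = f n ^ k := by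
  intro k hk
  induction k with
  | zero => omega
  | succ k ih =>
    rcases Nat.eq_or_lt_of_le hk with h | h
    · simp [← h]
    · have hk1 : 1 ≤ k := by omega
      rw [pow_succ, pow_succ, hf.2 _ _ (Nat.one_le_pow _ _ hn) hn, ih hk1]

lemma cm_prod {f : ℕ → ℂ} (hf : IsCM f) {ι : Type*} (s : Finset ι) (g : ι → ℕ)
    (hg : ∀ i ∈ s, 1 ≤ g i) : f (∏ i ∈ s, g i) = ∏ i ∈ s, f (g i) := by
  induction s using Finset.cons_induction with
  | empty => simpa using hf.1
  | cons a s ha ih =>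
    have hpos : 1 ≤ ∏ x ∈ s, g x :=
      Nat.one_le_iff_ne_zero.mpr (Finset.prod_ne_zero_iff.mpr
        (fun i hi => Nat.one_le_iff_ne_zero.mp (hg i (Finset.mem_cons_of_mem hi))))
    rw [Finset.prod_cons, Finset.prod_cons,
      hf.2 _ _ (hg a (Finset.mem_cons_self a s)) hpos,
      ih (fun i hi => hg i (Finset.mem_cons_of_mem hi))]

lemma nth_prime_ne {i j : ℕ} (h : i ≠ j) :
    Nat.nth Nat.Prime i ≠ Nat.nth Nat.Prime j :=
  fun hc => h (Nat.nth_injective Nat.infinite_setOf_prime hc)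

lemma prod_pow_inj {K : ℕ} {θ θ' : Fin K → ℕ}
    (h : ∏ i : Fin K, Nat.nth Nat.Prime i ^ θ i
       = ∏ i : Fin K, Nat.nth Nat.Prime i ^ θ' i) : θ = θ' := by
  have key : ∀ (σ : Fin K → ℕ) (j : Fin K),
      (Nat.factorization (∏ i : Fin K, Nat.nth Nat.Prime i ^ σ i))
        (Nat.nth Nat.Prime j) = σ j := by
    intro σ j
    have hfp := Nat.factorization_prod (S := (Finset.univ : Finset (Fin K)))
      (g := fun i : Fin K => Nat.nth Nat.Prime (i : ℕ) ^ σ i)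
      (fun i _ => pow_ne_zero _ (Nat.prime_nth_prime (i : ℕ)).ne_zero)
    rw [hfp, Finset.sum_apply', Finset.sum_eq_single j]
    · rw [(Nat.prime_nth_prime (j : ℕ)).factorization_pow, Finsupp.single_eq_same]
    · intro i _ hij
      rw [(Nat.prime_nth_prime (i : ℕ)).factorization_pow,
        Finsupp.single_eq_of_ne' (nth_prime_ne (fun hc => hij (Fin.val_injective hc)))]
    · intro hj; exact absurd (Finset.mem_univ j) hj
  funext j
  have hj := key θ j
  rw [h, key θ' j] at hj
  exact hj.symm

lemma geom_key (x : ℂ) (a b : ℕ) (hab : a ≤ b) :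
    (1 - x) * ∑ θ ∈ Finset.Ioc a b, x ^ θ = x ^ (a + 1) - x ^ (b + 1) := by
  have h1 : Finset.Ioc a b = Finset.Ico (a + 1) (b + 1) := by
    ext t; simp only [Finset.mem_Ioc, Finset.mem_Ico]; omega
  have h2 : ∀ k ∈ Finset.range (b + 1 - (a + 1)), x ^ (a + 1 + k) = x ^ (a+1) * x ^ k :=
    fun k _ => pow_add x (a+1) k
  have h4 : b + 1 - (a + 1) = b - a := by omega
  rw [h1, Finset.sum_Ico_eq_sum_range, Finset.sum_congr rfl h2, ← Finset.mul_sum, h4]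
  have h3 := geom_sum_mul x (b - a)
  calc (1 - x) * (x ^ (a+1) * ∑ i ∈ Finset.range (b - a), x ^ i)
      = x ^ (a+1) * ((∑ i ∈ Finset.range (b - a), x ^ i) * (x - 1)) * (-1) := by ring
    _ = x ^ (a+1) * (x ^ (b - a) - 1) * (-1) := by rw [h3]
    _ = x ^ (a+1) - x ^ (a+1) * x ^ (b - a) := by ring
    _ = x ^ (a+1) - x ^ (b+1) := by rw [← pow_add]; congr 2; omega

theorem stmt16 :
    ∃ c : ℝ, 0 < c ∧ ∀ f : ℕ → ℂ, IsCM f → (∀ n : ℕ, ‖f n‖ ≤ 1) →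
      ∀ K : ℕ, 1 ≤ K → ∀ p : ℕ, p.Prime → (∃ i : Fin K, p = Nat.nth Nat.Prime i) →
        ‖(1 - f p) * ((∑ n ∈ Phi K, f n) / ((Phi K).card : ℂ))‖ ≤
          c / 2 ^ K := by
  refine ⟨2, by norm_num, ?_⟩
  intro f hf hb K hK p hp ⟨i0, hi0⟩
  set q : Fin K → ℕ := fun i => Nat.nth Nat.Prime (i : ℕ) with hq
  set a : ℕ := 2 ^ K with ha
  set b : ℕ := 2 ^ (K + 1) with hbK
  have hab : a ≤ b := Nat.pow_le_pow_right (by norm_num) (by omega)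
  have ha1 : 1 ≤ a := Nat.one_le_two_pow
  have hba : b - a = a := by rw [ha, hbK, pow_succ]; omega
  have hinj : ∀ x ∈ Fintype.piFinset fun _ : Fin K => Finset.Ioc a b,
      ∀ y ∈ Fintype.piFinset fun _ : Fin K => Finset.Ioc a b,
      (∏ i : Fin K, q i ^ x i) = (∏ i : Fin K, q i ^ y i) → x = y :=
    fun x _ y _ h => prod_pow_inj h
  have hcard : (Phi K).card = a ^ K := by
    rw [Phi, Finset.card_image_of_injOn (fun x hx y hy h => hinj x hx y hy h),
      Fintype.card_piFinset]
    simp only [Nat.card_Ioc]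
    rw [Finset.prod_const, Finset.card_univ, Fintype.card_fin, hba]
  set S : Fin K → ℂ := fun i => ∑ θ ∈ Finset.Ioc a b, f (q i) ^ θ with hS
  have hsum : (∑ n ∈ Phi K, f n) = ∏ i : Fin K, S i := by
    rw [Phi, Finset.sum_image hinj, Finset.prod_univ_sum]
    apply Finset.sum_congr rfl
    intro θ hθ
    rw [Fintype.mem_piFinset] at hθ
    have hθ1 : ∀ i : Fin K, 1 ≤ θ i := fun i => by
      have := (Finset.mem_Ioc.mp (hθ i)).1; omega
    rw [cm_prod hf _ _ (fun i _ => Nat.one_le_pow _ _ (Nat.prime_nth_prime _).pos)]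
    exact Finset.prod_congr rfl fun i _ =>
      cm_pow hf (Nat.prime_nth_prime (i : ℕ)).one_lt.le _ (hθ1 i)
  have hSbound : ∀ i : Fin K, ‖S i‖ ≤ (a : ℝ) := by
    intro i
    calc ‖S i‖ ≤ ∑ θ ∈ Finset.Ioc a b, ‖f (q i) ^ θ‖ :=
          norm_sum_le _ _
      _ ≤ ∑ θ ∈ Finset.Ioc a b, 1 := by
          apply Finset.sum_le_sum
          intro θ _
          rw [norm_pow]
          exact pow_le_one₀ (norm_nonneg _) (hb _)
      _ = ((b - a : ℕ) : ℝ) := by rw [Finset.sum_const, Nat.card_Ioc]; simp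
      _ = (a : ℝ) := by rw [hba]
  have hkey : ‖(1 - f p) * S i0‖ ≤ 2 := by
    rw [hS, hi0]
    show ‖(1 - f (q i0)) * ∑ θ ∈ Finset.Ioc a b, f (q i0) ^ θ‖ ≤ 2
    rw [geom_key _ _ _ hab]
    calc ‖f (q i0) ^ (a+1) - f (q i0) ^ (b+1)‖
        ≤ ‖f (q i0) ^ (a+1)‖ + ‖f (q i0) ^ (b+1)‖ :=
          norm_sub_le _ _
      _ ≤ 1 + 1 := by
          gcongr <;> rw [norm_pow] <;> exact pow_le_one₀ (norm_nonneg _) (hb _)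
      _ = 2 := by norm_num
  rw [hsum, hcard]
  rw [← Finset.mul_prod_erase Finset.univ S (Finset.mem_univ i0)]
  set P : ℂ := ∏ j ∈ Finset.univ.erase i0, S j with hPdef
  have hre : (1 - f p) * ((S i0 * P) / ((a ^ K : ℕ) : ℂ))
      = ((1 - f p) * S i0 * P) / ((a ^ K : ℕ) : ℂ) := by ring
  rw [hre, norm_div, norm_mul]
  have hP : ‖P‖ ≤ (a : ℝ) ^ (K - 1) := by
    rw [hPdef, norm_prod]
    calc ∏ j ∈ Finset.univ.erase i0, ‖S j‖
        ≤ ∏ _j ∈ Finset.univ.erase i0, (a : ℝ) :=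
          Finset.prod_le_prod (fun j _ => norm_nonneg _) (fun j _ => hSbound j)
      _ = (a : ℝ) ^ (K - 1) := by
          rw [Finset.prod_const, Finset.card_erase_of_mem (Finset.mem_univ i0),
            Finset.card_univ, Fintype.card_fin]
  have hden : ‖((a ^ K : ℕ) : ℂ)‖ = (a : ℝ) ^ K := by
    rw [Complex.norm_natCast]; push_cast; ring
  rw [hden]
  rw [div_le_div_iff₀ (by positivity) (by positivity)]
  calc ‖(1 - f p) * S i0‖ * ‖P‖ * 2 ^ K
      ≤ 2 * (a : ℝ) ^ (K - 1) * 2 ^ K := by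
        apply mul_le_mul_of_nonneg_right _ (by positivity)
        exact mul_le_mul hkey hP (norm_nonneg _) (by norm_num)
    _ = 2 * (a : ℝ) ^ K := by
        have hKs : K = (K - 1) + 1 := by omega
        have : (a : ℝ) ^ K = (a : ℝ) ^ (K - 1) * 2 ^ K := by
          conv_lhs => rw [hKs]
          rw [pow_succ, ha]
          push_cast
          ring
        rw [this]; ring
end
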